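/- arXiv:1403.7420 — 8 statements merged into one kernel-verified Lean document; each statement's English description precedes it below -/
import Mathlib

section
/- Suppose 0 < α < γ. Then the infimum I_n of the discrete energy E_n over (ℝ^d)^n is strictly negative: there exists a configuration of n collinear equally spaced points with spacing 1/n whose energy E_n is negative. -/
open Finset

noncomputable def En (d n : ℕ) (α γ : ℝ) (x : Fin n → EuclideanSpace ℝ (Fin d)) : ℝ :=
  ∑ i, ∑ j, if i = j then 0 else ‖x i - x j‖ ^ γ / γ - ‖x i - x j‖ ^ α / α

lemma term_neg (α γ r : ℝ) (hα : 0 < α) (h : α < γ) (hr : 0 < r) (hr1 : r < 1) :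
    r ^ γ / γ - r ^ α / α < 0 := by
  have h1 : r ^ γ < r ^ α := Real.rpow_lt_rpow_of_exponent_gt hr hr1 h
  have hγ : 0 < γ := hα.trans h
  have hpos : (0:ℝ) ≤ r ^ γ := (Real.rpow_pos_of_pos hr γ).le
  have h2 : r ^ γ / γ ≤ r ^ γ / α := by gcongr
  have h3 : r ^ γ / α < r ^ α / α := by gcongr
  linarith

theorem stmt_2 (d n : ℕ) (hd : 1 ≤ d) (hn : 2 ≤ n) (α γ : ℝ) (hα : 0 < α) (h : α < γ) :
    ∃ v : EuclideanSpace ℝ (Fin d), ‖v‖ = 1 ∧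
      En d n α γ (fun i => ((i : ℝ) / n) • v) < 0 := by
  have hn0 : (0:ℝ) < n := by
    have : 0 < n := lt_of_lt_of_le two_pos hn
    exact_mod_cast this
  set v : EuclideanSpace ℝ (Fin d) := EuclideanSpace.single (⟨0, hd⟩ : Fin d) (1:ℝ) with hvdef
  have hv : ‖v‖ = 1 := by simp [hvdef]
  refine ⟨v, hv, ?_⟩
  have hnorm : ∀ i j : Fin n,
      ‖((i:ℝ)/n) • v - ((j:ℝ)/n) • v‖ = |(i:ℝ)/n - (j:ℝ)/n| := by
    intro i j
    rw [← sub_smul, norm_smul, hv, mul_one, Real.norm_eq_abs]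
  have hlt1 : ∀ i : Fin n, (i:ℝ)/n < 1 := by
    intro i
    rw [div_lt_one hn0]
    exact_mod_cast i.isLt
  have hnn : ∀ i : Fin n, (0:ℝ) ≤ (i:ℝ)/n := by
    intro i; positivity
  have key : ∀ i j : Fin n, i ≠ j →
      ‖((i:ℝ)/n) • v - ((j:ℝ)/n) • v‖ ^ γ / γ - ‖((i:ℝ)/n) • v - ((j:ℝ)/n) • v‖ ^ α / α < 0 := by
    intro i j hij
    rw [hnorm]
    apply term_neg α γ _ hα h
    · rw [abs_pos, sub_ne_zero]
      intro hc
      apply hij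
      field_simp at hc
      exact Fin.ext (by exact_mod_cast hc)
    · rw [abs_sub_lt_iff]
      constructor
      · have := hlt1 i; have := hnn j; linarith
      · have := hlt1 j; have := hnn i; linarith
  unfold En
  have hNT : Nontrivial (Fin n) := Fin.nontrivial_iff_two_le.mpr hn
  have hinner : ∀ i : Fin n,
      (∑ j, if i = j then 0 else ‖((i:ℝ)/n) • v - ((j:ℝ)/n) • v‖ ^ γ / γ -
        ‖((i:ℝ)/n) • v - ((j:ℝ)/n) • v‖ ^ α / α) < 0 := by
    intro i
    obtain ⟨j, hj⟩ := exists_ne i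
    have : (∑ j : Fin n, (0:ℝ)) = 0 := by simp
    rw [← this]
    apply Finset.sum_lt_sum
    · intro k _
      by_cases hk : i = k
      · simp [hk]
      · simp only [if_neg hk]
        exact (key i k hk).le
    · exact ⟨j, Finset.mem_univ j, by simp only [if_neg (Ne.symm hj)]; exact key i j (Ne.symm hj)⟩
  have : (Finset.univ : Finset (Fin n)).Nonempty := Finset.univ_nonempty
  calc (∑ i : Fin n, ∑ j, if i = j then 0 else ‖((i:ℝ)/n) • v - ((j:ℝ)/n) • v‖ ^ γ / γ -
        ‖((i:ℝ)/n) • v - ((j:ℝ)/n) • v‖ ^ α / α) < 0 :=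
      Finset.sum_neg (fun i _ => hinner i) this
end

section
/- Suppose 0 < α < γ. If x = (x_1,…,x_n) ∈ (ℝ^d)^n satisfies E_n(x) < 0, then the diameter R = max_{i,j} |x_i − x_j| satisfies R ≤ (n²γ/α)^{1/(γ−α)}. -/
open Finset

lemma term_lb {α γ r : ℝ} (hα : 0 < α) (h : α < γ) (hr : 0 ≤ r) :
    -(1/α) ≤ r ^ γ / γ - r ^ α / α := by
  have hγ : 0 < γ := hα.trans h
  have key : r ^ α ≤ α/γ * r ^ γ + (1 - α/γ) * 1 := by
    have hw1 : 0 ≤ α/γ := by positivity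
    have hw2 : 0 ≤ 1 - α/γ := by
      rw [sub_nonneg, div_le_one hγ]; exact h.le
    have h2 := Real.geom_mean_le_arith_mean2_weighted hw1 hw2
      (Real.rpow_nonneg hr γ) zero_le_one (by field_simp; ring)
    calc r ^ α = (r ^ γ) ^ (α/γ) * 1 ^ (1 - α/γ) := by
          rw [Real.one_rpow, mul_one, ← Real.rpow_mul hr]
          congr 1
          field_simp
      _ ≤ _ := h2
  have h2 : r ^ α / α ≤ (α/γ * r ^ γ + (1 - α/γ) * 1) / α := by gcongr
  have h3 : (α/γ * r ^ γ + (1 - α/γ) * 1) / α = r ^ γ / γ + (1/α - 1/γ) := by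
    field_simp
  have h4 : 0 < 1/γ := by positivity
  rw [h3] at h2
  linarith

theorem stmt_3 (d n : ℕ) (α γ : ℝ) (hα : 0 < α) (h : α < γ)
    (x : Fin n → EuclideanSpace ℝ (Fin d)) (hx : En d n α γ x < 0) :
    ∀ i j, ‖x i - x j‖ ≤ ((n : ℝ) ^ 2 * γ / α) ^ (1 / (γ - α)) := by
  intro i j
  have hγ : 0 < γ := hα.trans h
  have hd : 0 < γ - α := sub_pos.2 h
  set R := ‖x i - x j‖ with hR
  have hRnn : 0 ≤ R := norm_nonneg _
  rcases Nat.eq_zero_or_pos n with hn0 | hn0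
  · subst hn0; exact i.elim0
  have hn1 : 1 ≤ (n:ℝ) := by exact_mod_cast hn0
  have hbase : 1 ≤ (n:ℝ)^2 * γ / α := by
    rw [le_div_iff₀ hα]
    have hnn : 1 ≤ (n:ℝ)^2 := by nlinarith
    nlinarith [mul_le_mul_of_nonneg_right hnn hγ.le]
  by_cases hR1 : R ≤ 1
  · calc R ≤ 1 := hR1
      _ ≤ ((n:ℝ)^2*γ/α) ^ (1/(γ-α)) := Real.one_le_rpow hbase (by positivity)
  push_neg at hR1
  have hRpos : (0:ℝ) < R := lt_trans one_pos hR1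
  have hij : i ≠ j := by
    intro hij
    rw [hR, hij, sub_self, norm_zero] at hRpos
    exact lt_irrefl 0 hRpos
  have hn2 : 2 ≤ n := by
    have h1 := i.isLt
    have h2 := j.isLt
    have hv : i.val ≠ j.val := fun hv => hij (Fin.ext hv)
    omega
  have hn2' : (2:ℝ) ≤ (n:ℝ)^2 := by
    have : (2:ℝ) ≤ (n:ℝ) := by exact_mod_cast hn2
    nlinarith
  set f : Fin n × Fin n → ℝ := fun p =>
    if p.1 = p.2 then 0 else ‖x p.1 - x p.2‖ ^ γ / γ - ‖x p.1 - x p.2‖ ^ α / α with hf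
  have hEn : En d n α γ x = ∑ p : Fin n × Fin n, f p := by
    rw [En, ← Finset.univ_product_univ, Finset.sum_product]
  have hflb : ∀ p : Fin n × Fin n, -(1/α) ≤ f p := by
    intro p
    by_cases hp : p.1 = p.2
    · simp only [hf, if_pos hp]
      have : 0 < 1/α := by positivity
      linarith
    · simp only [hf, if_neg hp]
      exact term_lb hα h (norm_nonneg _)
  have hmem1 : ((i,j) : Fin n × Fin n) ∈ (univ : Finset (Fin n × Fin n)) := mem_univ _
  have hmem2 : ((j,i) : Fin n × Fin n) ∈ (univ : Finset (Fin n × Fin n)).erase (i,j) := by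
    rw [mem_erase]
    refine ⟨?_, mem_univ _⟩
    simp only [ne_eq, Prod.mk.injEq, not_and]
    intro hji
    exact absurd hji (Ne.symm hij)
  have hsplit : f (i,j) + (f (j,i) + ∑ p ∈ ((univ : Finset (Fin n × Fin n)).erase (i,j)).erase (j,i), f p)
      = ∑ p : Fin n × Fin n, f p := by
    rw [Finset.add_sum_erase _ f hmem2, Finset.add_sum_erase _ f hmem1]
  have hcard : ((((univ : Finset (Fin n × Fin n)).erase (i,j)).erase (j,i)).card : ℝ) ≤ (n:ℝ)^2 := by
    have h1 : (((univ : Finset (Fin n × Fin n)).erase (i,j)).erase (j,i)).card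
        ≤ (univ : Finset (Fin n × Fin n)).card :=
      Finset.card_le_card ((Finset.erase_subset _ _).trans (Finset.erase_subset _ _))
    have h2 : (univ : Finset (Fin n × Fin n)).card = n * n := by
      simp [Finset.card_univ]
    rw [h2] at h1
    calc ((((univ : Finset (Fin n × Fin n)).erase (i,j)).erase (j,i)).card : ℝ)
        ≤ ((n*n : ℕ) : ℝ) := by exact_mod_cast h1
      _ = (n:ℝ)^2 := by push_cast; ring
  have htail : -((n:ℝ)^2 * (1/α)) ≤ ∑ p ∈ ((univ : Finset (Fin n × Fin n)).erase (i,j)).erase (j,i), f p := by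
    have h1 := Finset.card_nsmul_le_sum ((((univ : Finset (Fin n × Fin n)).erase (i,j)).erase (j,i)))
      f (-(1/α)) (fun p _ => hflb p)
    rw [nsmul_eq_mul] at h1
    have hinv : 0 < 1/α := by positivity
    nlinarith [h1, hcard, hinv]
  have hfij : f (i,j) = R ^ γ / γ - R ^ α / α := by
    simp only [hf, if_neg hij]
    rfl
  have hfji : f (j,i) = R ^ γ / γ - R ^ α / α := by
    simp only [hf]
    rw [if_neg (Ne.symm hij)]
    rw [norm_sub_rev]
  have hkey : 2 * (R ^ γ / γ - R ^ α / α) < (n:ℝ)^2 * (1/α) := by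
    rw [hEn, ← hsplit, hfij, hfji] at hx
    linarith
  have hkey2 : 2 * α * R ^ γ - 2 * γ * R ^ α < (n:ℝ)^2 * γ := by
    have h' := mul_lt_mul_of_pos_right hkey (mul_pos hγ hα)
    have e1 : 2 * (R ^ γ / γ - R ^ α / α) * (γ * α) = 2 * α * R ^ γ - 2 * γ * R ^ α := by
      field_simp
    have e2 : (n:ℝ)^2 * (1/α) * (γ * α) = (n:ℝ)^2 * γ := by
      field_simp
    rw [e1, e2] at h'
    exact h'
  have hA : (1:ℝ) ≤ R ^ α := Real.one_le_rpow hR1.le hα.le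
  have hApos : 0 < R ^ α := Real.rpow_pos_of_pos hRpos _
  have hBpos : 0 < R ^ (γ - α) := Real.rpow_pos_of_pos hRpos _
  have hsplitpow : R ^ γ = R ^ (γ - α) * R ^ α := by
    rw [← Real.rpow_add hRpos]
    ring_nf
  rw [hsplitpow] at hkey2
  have hmain : R ^ (γ - α) ≤ (n:ℝ)^2 * γ / α := by
    rw [le_div_iff₀ hα]
    nlinarith [hkey2, hA, hApos, hBpos, hn2', hγ, hα,
      mul_nonneg (mul_nonneg hα.le hBpos.le) (sub_nonneg.2 hA),
      mul_nonneg (sub_nonneg.2 hn2') (mul_nonneg hγ.le (sub_nonneg.2 hA)),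
      mul_nonneg hγ.le (sub_nonneg.2 hA),
      mul_nonneg (sub_nonneg.2 hn2') hγ.le]
  have hRe : R = (R ^ (γ - α)) ^ (1/(γ-α)) := by
    rw [← Real.rpow_mul hRnn, mul_one_div, div_self hd.ne', Real.rpow_one]
  rw [hRe]
  exact Real.rpow_le_rpow (Real.rpow_nonneg hRnn _) hmain (by positivity)
end

section
/- Suppose 0 < α < γ. For every n ≥ 2 the infimum I_n = inf E_n over (ℝ^d)^n is attained by some configuration (x_1,…,x_n). -/
open Finset Filter

lemma w_lower {α γ : ℝ} (hα : 0 < α) (h : α < γ) {r : ℝ} (hr : 0 ≤ r) :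
    1/γ - 1/α ≤ r ^ γ / γ - r ^ α / α := by
  have hγ : 0 < γ := hα.trans h
  set s := r ^ α with hs
  have hs0 : 0 ≤ s := Real.rpow_nonneg hr α
  have hq : 1 ≤ γ / α := (one_le_div hα).2 h.le
  have hB : 1 + (γ/α) * (s - 1) ≤ r ^ γ := by
    have hbern := one_add_mul_self_le_rpow_one_add (s := s - 1) (by linarith) hq
    have h2 : (1 + (s - 1) : ℝ) = s := by ring
    rw [h2, hs, ← Real.rpow_mul hr] at hbern
    have h3 : α * (γ/α) = γ := by field_simp
    rwa [h3] at hbern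
  have key : α + γ * s - γ ≤ α * r ^ γ := by
    have h4 := mul_le_mul_of_nonneg_left hB hα.le
    have h5 : α * (1 + (γ/α) * (s - 1)) = α + γ * s - γ := by field_simp; ring
    linarith [h5 ▸ h4]
  rw [div_sub_div _ _ hγ.ne' hα.ne', div_sub_div _ _ hγ.ne' hα.ne',
    div_le_div_iff₀ (by positivity) (by positivity)]
  nlinarith [key, mul_pos hγ hα]

lemma exists_R {α γ : ℝ} (hα : 0 < α) (h : α < γ) (C : ℝ) :
    ∃ R : ℝ, 1 ≤ R ∧ ∀ r, R ≤ r → C ≤ r ^ γ / γ - r ^ α / α := by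
  have hγ : 0 < γ := hα.trans h
  have h1 : Tendsto (fun r : ℝ => r ^ α) atTop atTop := tendsto_rpow_atTop hα
  have h2 : Tendsto (fun r : ℝ => r ^ (γ - α) / γ + (-(1/α))) atTop atTop :=
    tendsto_atTop_add_const_right _ _ ((tendsto_rpow_atTop (by linarith)).atTop_div_const hγ)
  have h3 := h1.atTop_mul_atTop₀ h2
  have h4 : ∀ᶠ r : ℝ in atTop, C ≤ r ^ α * (r ^ (γ - α) / γ + (-(1/α))) :=
    h3.eventually_ge_atTop C
  obtain ⟨R, hR⟩ := (h4.and (eventually_ge_atTop (1:ℝ))).exists_forall_of_atTop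
  refine ⟨max R 1, le_max_right _ _, fun r hr => ?_⟩
  have hr1 : (1:ℝ) ≤ r := le_trans (le_max_right _ _) hr
  have hr0 : 0 < r := lt_of_lt_of_le one_pos hr1
  obtain ⟨hC, -⟩ := hR r (le_trans (le_max_left _ _) hr)
  calc C ≤ r ^ α * (r ^ (γ - α) / γ + (-(1/α))) := hC
    _ = r ^ γ / γ - r ^ α / α := by
        rw [mul_add, ← mul_div_assoc, ← Real.rpow_add hr0]
        ring_nf

lemma En_continuous (d n : ℕ) {α γ : ℝ} (hα : 0 < α) (hγ : 0 < γ) :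
    Continuous (En d n α γ) := by
  have hrp : ∀ p : ℝ, 0 < p → Continuous fun r : ℝ => r ^ p := fun p hp =>
    continuous_iff_continuousAt.2 fun x => Real.continuousAt_rpow_const x p (Or.inr hp.le)
  unfold En
  refine continuous_finset_sum _ fun i _ => continuous_finset_sum _ fun j _ => ?_
  by_cases hij : i = j
  · simpa [hij] using continuous_const
  · simp only [if_neg hij]
    have hnorm : Continuous fun x : Fin n → EuclideanSpace ℝ (Fin d) => ‖x i - x j‖ :=
      ((continuous_apply i).sub (continuous_apply j)).norm
    exact (((hrp γ hγ).comp hnorm).div_const γ).sub (((hrp α hα).comp hnorm).div_const α)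

lemma En_zero (d n : ℕ) {α γ : ℝ} (hα : 0 < α) (hγ : 0 < γ) :
    En d n α γ (fun _ => 0) = 0 := by
  unfold En
  simp [Real.zero_rpow hα.ne', Real.zero_rpow hγ.ne']

theorem stmt_4 (d n : ℕ) (hn : 2 ≤ n) (α γ : ℝ) (hα : 0 < α) (h : α < γ) :
    ∃ x : Fin n → EuclideanSpace ℝ (Fin d),
      ∀ y : Fin n → EuclideanSpace ℝ (Fin d), En d n α γ x ≤ En d n α γ y := by
  haveI : NeZero n := ⟨by omega⟩
  have hγ : 0 < γ := hα.trans h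
  set Em : ℝ := 1/γ - 1/α with hEm
  have hEm0 : Em ≤ 0 := by
    have h1 : 1/γ ≤ 1/α := one_div_le_one_div_of_le hα h.le
    rw [hEm]; linarith
  set C : ℝ := ((n * n - 1 : ℕ) : ℝ) * (-Em) with hC
  obtain ⟨R, hR1, hRC⟩ := exists_R hα h C
  set K := Metric.closedBall (0 : Fin n → EuclideanSpace ℝ (Fin d)) R with hK
  have hR0 : (0:ℝ) ≤ R := le_trans zero_le_one hR1
  have h0K : (fun _ => (0 : EuclideanSpace ℝ (Fin d))) ∈ K := by
    simp only [hK, Metric.mem_closedBall]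
    simpa using hR0
  obtain ⟨x, hxK, hxmin⟩ := (isCompact_closedBall _ _).exists_isMinOn ⟨_, h0K⟩
    (En_continuous d n hα hγ).continuousOn
  have hx0 : En d n α γ x ≤ 0 := by
    have h2 := hxmin h0K
    simp only [Set.mem_setOf_eq] at h2
    rwa [En_zero d n hα hγ] at h2
  refine ⟨x, fun y => ?_⟩
  set y' : Fin n → EuclideanSpace ℝ (Fin d) := fun i => y i - y 0 with hy'
  have hEy : En d n α γ y' = En d n α γ y := by
    unfold En
    refine Finset.sum_congr rfl fun i _ => Finset.sum_congr rfl fun j _ => ?_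
    simp [hy', sub_sub_sub_cancel_right]
  rw [← hEy]
  by_cases hball : ∀ i, ‖y' i‖ ≤ R
  · apply hxmin
    rw [mem_closedBall_zero_iff]
    refine (pi_norm_le_iff_of_nonneg hR0).2 fun i => ?_
    simpa using hball i
  · push_neg at hball
    obtain ⟨i, hi⟩ := hball
    have hy0 : y' 0 = 0 := by simp [hy']
    have hi0 : i ≠ 0 := by
      intro hcon; rw [hcon, hy0] at hi; simp at hi
      linarith
    -- lower bound En y' ≥ 0
    set g : Fin n × Fin n → ℝ := fun p =>
      if p.1 = p.2 then 0 else ‖y' p.1 - y' p.2‖ ^ γ / γ - ‖y' p.1 - y' p.2‖ ^ α / α with hg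
    have hEg : En d n α γ y' = ∑ p ∈ univ ×ˢ univ, g p := by
      rw [Finset.sum_product]; rfl
    have hmem : ((i, 0) : Fin n × Fin n) ∈ (univ ×ˢ univ : Finset (Fin n × Fin n)) := by simp
    have hsplit := Finset.sum_erase_add (univ ×ˢ univ) g hmem
    have hgi : C ≤ g (i, 0) := by
      rw [hg]; simp only [if_neg hi0]
      exact hRC _ (by rw [hy0, sub_zero]; exact hi.le)
    have hcard : ((univ ×ˢ univ : Finset (Fin n × Fin n)).erase (i, 0)).card = n * n - 1 := by
      rw [Finset.card_erase_of_mem hmem, Finset.card_product, Finset.card_univ, Fintype.card_fin]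
    have hlow : ∀ p ∈ (univ ×ˢ univ : Finset (Fin n × Fin n)).erase (i, 0), Em ≤ g p := by
      intro p _
      rw [hg]
      dsimp only
      split
      · exact hEm0
      · exact w_lower hα h (norm_nonneg _)
    have hsum : ((n * n - 1 : ℕ) : ℝ) * Em ≤ ∑ p ∈ (univ ×ˢ univ : Finset (Fin n × Fin n)).erase (i, 0), g p := by
      have := Finset.card_nsmul_le_sum _ _ _ hlow
      rwa [hcard, nsmul_eq_mul] at this
    have hpos : 0 ≤ En d n α γ y' := by
      rw [hEg, ← hsplit]
      have h3 : ((n * n - 1 : ℕ) : ℝ) * Em + C ≤ _ := add_le_add hsum hgi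
      refine le_trans ?_ h3
      rw [hC]; ring_nf; exact le_refl _
    linarith
end

section
/- Suppose α < γ < 0. Then for every n ≥ 2, the infimum of E_n over configurations of pairwise distinct points in ℝ^d is negative and is attained by some configuration contained (up to translation) in the cube [0, n−1]^d. -/
open Finset Set Filter MeasureTheory Topology ENNReal

section W
variable {α γ : ℝ} (hαγ : α < γ) (hγ : γ < 0)

noncomputable def wfun (α γ : ℝ) (r : ℝ) : ℝ := r ^ γ / γ - r ^ α / α

include hαγ hγ

lemma hα : α < 0 := hαγ.trans hγ

lemma wfun_hasDeriv {r : ℝ} (hr : 0 < r) :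
    HasDerivAt (wfun α γ) (r ^ (γ - 1) - r ^ (α - 1)) r := by
  have h1 := (Real.hasDerivAt_rpow_const (p := γ) (Or.inl hr.ne')).div_const γ
  have h2 := (Real.hasDerivAt_rpow_const (p := α) (Or.inl hr.ne')).div_const α
  have := h1.sub h2
  have hf : wfun α γ = ((fun x => x ^ γ / γ) - fun x => x ^ α / α) := by funext x; simp [wfun]
  rw [hf]
  simpa [mul_div_assoc, mul_comm, mul_div_cancel_left₀, hγ.ne, (hαγ.trans hγ).ne,
    mul_div_cancel_left₀] using this

lemma wfun_monoOn : MonotoneOn (wfun α γ) (Set.Ici 1) := by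
  have hcont : ContinuousOn (wfun α γ) (Set.Ici 1) := by
    apply ContinuousOn.sub <;> apply ContinuousOn.div_const <;>
      exact continuousOn_id.rpow_const fun x hx => Or.inl (by simp at hx; positivity)
  refine monotoneOn_of_hasDerivWithinAt_nonneg (convex_Ici 1) hcont
    (fun x hx => ((wfun_hasDeriv hαγ hγ (by simp [interior_Ici] at hx; linarith)).hasDerivWithinAt)) ?_
  intro x hx
  simp only [interior_Ici, Set.mem_Ioi] at hx
  have : x ^ (α - 1) ≤ x ^ (γ - 1) :=
    Real.rpow_le_rpow_of_exponent_le hx.le (by linarith)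
  linarith

lemma wfun_antiOn : AntitoneOn (wfun α γ) (Set.Ioc 0 1) := by
  have hcont : ContinuousOn (wfun α γ) (Set.Ioc 0 1) := by
    apply ContinuousOn.sub <;> apply ContinuousOn.div_const <;>
      exact continuousOn_id.rpow_const fun x hx => Or.inl (ne_of_gt hx.1)
  refine antitoneOn_of_hasDerivWithinAt_nonpos (convex_Ioc 0 1) hcont
    (fun x hx => ((wfun_hasDeriv hαγ hγ (by simp [interior_Ioc] at hx; exact hx.1)).hasDerivWithinAt)) ?_
  intro x hx
  simp only [interior_Ioc, Set.mem_Ioo] at hx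
  have : x ^ (γ - 1) ≤ x ^ (α - 1) :=
    Real.rpow_le_rpow_of_exponent_ge hx.1 hx.2.le (by linarith)
  linarith

omit hαγ hγ in
lemma wfun_one : wfun α γ 1 = 1/γ - 1/α := by simp [wfun, Real.one_rpow]

lemma wfun_min {r : ℝ} (hr : 0 < r) : 1/γ - 1/α ≤ wfun α γ r := by
  rw [← wfun_one (α := α) (γ := γ)]
  rcases le_total r 1 with hr1 | hr1
  · exact wfun_antiOn hαγ hγ ⟨hr, hr1⟩ (by norm_num) hr1
  · exact wfun_monoOn hαγ hγ (by norm_num) hr1 hr1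

lemma wfun_neg {r : ℝ} (hr : 1 ≤ r) : wfun α γ r < 0 := by
  have hα' : α < 0 := hαγ.trans hγ
  have h0 : (0:ℝ) < r := by linarith
  have h1 : (0:ℝ) < r ^ α := Real.rpow_pos_of_pos h0 _
  have h2 : r ^ α ≤ r ^ γ := Real.rpow_le_rpow_of_exponent_le hr hαγ.le
  have h3 : α * r ^ γ - γ * r ^ α < 0 := by nlinarith
  have h4 : wfun α γ r = (α * r ^ γ - γ * r ^ α) / (α * γ) := by
    rw [wfun, div_sub_div _ _ hγ.ne (hαγ.trans hγ).ne, div_eq_div_iff (mul_ne_zero hγ.ne hα'.ne) (mul_ne_zero hα'.ne hγ.ne)]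
    ring
  rw [h4]
  exact div_neg_of_neg_of_pos h3 (mul_pos_of_neg_of_neg hα' hγ)

lemma wfun_tendsto : Tendsto (fun r => wfun α γ r) (𝓝[>] (0:ℝ)) atTop := by
  have hα' : α < 0 := hαγ.trans hγ
  -- r ^ α → atTop
  have h1 : Tendsto (fun r : ℝ => r ^ α) (𝓝[>] (0:ℝ)) atTop := by
    have := (tendsto_rpow_atTop (y := -α) (by linarith)).comp tendsto_inv_nhdsGT_zero
    refine this.congr' ?_
    filter_upwards [self_mem_nhdsWithin] with r (hr : 0 < r)
    simp only [Function.comp]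
    rw [← Real.rpow_neg_one r, ← Real.rpow_mul hr.le]
    norm_num
  -- choose δ₁
  set t : ℝ := γ / (2 * α) with ht
  have htpos : 0 < t := div_pos_of_neg_of_neg hγ (by linarith)
  have htlt : t < 1 := by
    rw [div_lt_one_of_neg (by linarith)]
    linarith
  set δ₁ : ℝ := t ^ (1 / (γ - α)) with hδ₁
  have hδ₁pos : 0 < δ₁ := Real.rpow_pos_of_pos htpos _
  have hδ₁lt : δ₁ < 1 := Real.rpow_lt_one htpos.le htlt (by rw [one_div]; exact inv_pos.mpr (by linarith))
  have hδ₁pow : δ₁ ^ (γ - α) = t := by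
    rw [hδ₁, ← Real.rpow_mul htpos.le, one_div, inv_mul_cancel₀ (by linarith : γ - α ≠ 0),
      Real.rpow_one]
  -- lower bound on (0, δ₁]
  have key : ∀ r : ℝ, 0 < r → r ≤ δ₁ → (-1/(2*α)) * r ^ α ≤ wfun α γ r := by
    intro r hr hrδ
    have hB : r ^ (γ - α) ≤ t := by
      rw [← hδ₁pow]
      exact Real.rpow_le_rpow hr.le hrδ (by linarith)
    have hBpos : 0 < r ^ (γ - α) := Real.rpow_pos_of_pos hr _
    have hApos : 0 < r ^ α := Real.rpow_pos_of_pos hr _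
    have hsplit : r ^ γ = r ^ α * r ^ (γ - α) := by
      rw [← Real.rpow_add hr]; ring_nf
    rw [wfun, hsplit]
    set A := r ^ α
    set B := r ^ (γ - α)
    rw [ht] at hB
    have h2αB : γ ≤ B * (2 * α) := (le_div_iff_of_neg (by linarith : 2*α < 0)).mp hB
    have hq : 1/(2*α) ≤ B/γ := by
      rw [show (1:ℝ)/(2*α) = (-1)/(-(2*α)) by ring, show B/γ = (-B)/(-γ) by ring,
        div_le_div_iff₀ (by linarith) (by linarith)]
      linarith
    calc (-1/(2*α)) * A = A * (-1/(2*α)) := by ring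
      _ ≤ A * (B/γ - 1/α) := by
          apply mul_le_mul_of_nonneg_left _ hApos.le
          have : -1/(2*α) = 1/(2*α) - 1/α := by ring
          linarith
      _ = A * B / γ - A / α := by ring
  -- conclude tendsto
  have h2 : Tendsto (fun r : ℝ => (-1/(2*α)) * r ^ α) (𝓝[>] (0:ℝ)) atTop :=
    h1.const_mul_atTop (div_pos_of_neg_of_neg (by norm_num) (by linarith))
  refine tendsto_atTop_mono' _ ?_ h2
  filter_upwards [self_mem_nhdsWithin, Ioo_mem_nhdsGT_of_mem (by constructor <;> linarith : (0:ℝ) ∈ Set.Ico 0 δ₁)] with r hr hr'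
  exact key r hr hr'.2.le

lemma wfun_small (M : ℝ) : ∃ δ : ℝ, 0 < δ ∧ δ < 1 ∧ ∀ r : ℝ, 0 < r → r ≤ δ → M ≤ wfun α γ r := by
  have hev : {r : ℝ | M ≤ wfun α γ r} ∈ 𝓝[>] (0:ℝ) :=
    (wfun_tendsto hαγ hγ).eventually (eventually_ge_atTop M)
  rw [mem_nhdsGT_iff_exists_Ioc_subset] at hev
  obtain ⟨u, hu, hsub⟩ := hev
  refine ⟨min u (1/2), by simp [lt_min_iff]; exact hu, by
    simpa using lt_of_le_of_lt (min_le_right _ _) (by norm_num), ?_⟩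
  intro r hr hrδ
  exact hsub ⟨hr, hrδ.trans (min_le_left _ _)⟩

end W

section Compress
variable {n : ℕ}

noncomputable def Uset (v : Fin n → ℝ) : Set ℝ := ⋃ j, Set.Icc (v j) (v j + 1)

noncomputable def gmap (v : Fin n → ℝ) (t : ℝ) : ℝ :=
  (volume (Uset v ∩ Set.Iic t)).toReal

lemma Uset_meas (v : Fin n → ℝ) : MeasurableSet (Uset v) :=
  MeasurableSet.iUnion fun j => measurableSet_Icc

lemma Uset_vol (v : Fin n → ℝ) : volume (Uset v) ≤ n := by
  refine (measure_iUnion_le _).trans ?_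
  rw [tsum_fintype]
  have h1 : ∀ j : Fin n, volume (Set.Icc (v j) (v j + 1)) = 1 := by
    intro j; rw [Real.volume_Icc]; norm_num
  simp [h1]

lemma Uset_vol_ne_top (v : Fin n → ℝ) (s : Set ℝ) : volume (Uset v ∩ s) ≠ ⊤ :=
  ne_top_of_le_ne_top (by simp) ((measure_mono Set.inter_subset_left).trans (Uset_vol v))

lemma gmap_diff (v : Fin n → ℝ) {a b : ℝ} (hab : a ≤ b) :
    gmap v b - gmap v a = (volume (Uset v ∩ Set.Ioc a b)).toReal := by
  have hsplit : Uset v ∩ Set.Iic b = (Uset v ∩ Set.Iic a) ∪ (Uset v ∩ Set.Ioc a b) := by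
    rw [← Set.inter_union_distrib_left, Set.Iic_union_Ioc_eq_Iic hab]
  have hdisj : Disjoint (Uset v ∩ Set.Iic a) (Uset v ∩ Set.Ioc a b) := by
    apply Set.disjoint_of_subset Set.inter_subset_right Set.inter_subset_right
    exact Set.Iic_disjoint_Ioc le_rfl
  rw [gmap, gmap, hsplit, measure_union hdisj ((Uset_meas v).inter measurableSet_Ioc),
    ENNReal.toReal_add (Uset_vol_ne_top v _) (Uset_vol_ne_top v _)]
  ring

lemma gmap_mono (v : Fin n → ℝ) {a b : ℝ} (hab : a ≤ b) : gmap v a ≤ gmap v b := by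
  have := gmap_diff v hab
  have h2 : (0:ℝ) ≤ (volume (Uset v ∩ Set.Ioc a b)).toReal := ENNReal.toReal_nonneg
  linarith

lemma gmap_lip (v : Fin n → ℝ) {a b : ℝ} (hab : a ≤ b) : gmap v b - gmap v a ≤ b - a := by
  rw [gmap_diff v hab]
  calc (volume (Uset v ∩ Set.Ioc a b)).toReal ≤ (volume (Set.Ioc a b)).toReal := by
        apply ENNReal.toReal_mono (by rw [Real.volume_Ioc]; exact ENNReal.ofReal_ne_top)
        exact measure_mono Set.inter_subset_right
    _ = b - a := by rw [Real.volume_Ioc, ENNReal.toReal_ofReal (by linarith)]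

lemma gmap_lower (v : Fin n → ℝ) (i : Fin n) {b : ℝ} (hb : v i ≤ b) :
    min (b - v i) 1 ≤ gmap v b - gmap v (v i) := by
  rw [gmap_diff v hb]
  have hsub : Set.Ioc (v i) (min b (v i + 1)) ⊆ Uset v ∩ Set.Ioc (v i) b := by
    intro x hx
    refine ⟨Set.mem_iUnion.mpr ⟨i, ⟨hx.1.le, (hx.2.trans (min_le_right _ _))⟩⟩,
      hx.1, hx.2.trans (min_le_left _ _)⟩
  calc min (b - v i) 1
      = (volume (Set.Ioc (v i) (min b (v i + 1)))).toReal := by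
        rw [Real.volume_Ioc,
          ENNReal.toReal_ofReal (by rw [sub_nonneg, le_min_iff]; exact ⟨hb, by linarith⟩)]
        rw [← min_sub_sub_right]
        norm_num
    _ ≤ _ := ENNReal.toReal_mono (Uset_vol_ne_top v _) (measure_mono hsub)

lemma gmap_span (v : Fin n → ℝ) (i j : Fin n) : gmap v (v i) - gmap v (v j) ≤ (n:ℝ) - 1 := by
  have hn1 : 1 ≤ n := Nat.one_le_iff_ne_zero.mpr (by rintro rfl; exact i.elim0)
  rcases le_total (v i) (v j) with hle | hle
  · have := gmap_mono v hle
    have : gmap v (v i) - gmap v (v j) ≤ 0 := by linarith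
    have hn' : (1:ℝ) ≤ (n:ℝ) := by exact_mod_cast hn1
    linarith
  · rw [gmap_diff v hle]
    have hcover : Uset v ∩ Set.Ioc (v j) (v i) ⊆ ⋃ k, (Set.Icc (v k) (v k + 1) ∩ Set.Ioc (v j) (v i)) := by
      rw [Uset, Set.iUnion_inter]
    have hbound : volume (Uset v ∩ Set.Ioc (v j) (v i)) ≤ ((n - 1 : ℕ) : ℝ≥0∞) := by
      refine (measure_mono hcover).trans ((measure_iUnion_le _).trans ?_)
      rw [tsum_fintype]
      have key : ∀ k : Fin n, volume (Set.Icc (v k) (v k + 1) ∩ Set.Ioc (v j) (v i))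
          ≤ (if k = i then 0 else 1) := by
        intro k
        by_cases hk : k = i
        · subst hk
          simp only [if_pos rfl]
          have : Set.Icc (v k) (v k + 1) ∩ Set.Ioc (v j) (v k) ⊆ {v k} := by
            rintro x ⟨⟨h1, _⟩, ⟨_, h2⟩⟩
            exact Set.mem_singleton_iff.mpr (le_antisymm h2 h1)
          exact le_trans (measure_mono this) (by simp)
        · simp only [if_neg hk]
          refine le_trans (measure_mono Set.inter_subset_left) ?_
          rw [Real.volume_Icc]
          norm_num
      refine (Finset.sum_le_sum fun k _ => key k).trans ?_
      rw [Finset.sum_ite, Finset.sum_const, Finset.sum_const]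
      have hcard : (Finset.univ.filter (fun k : Fin n => ¬ k = i)).card = n - 1 := by
        have : (Finset.univ.filter (fun k : Fin n => ¬ k = i)) = Finset.univ.erase i := by
          ext k; simp [Finset.mem_erase, and_comm]
        rw [this, Finset.card_erase_of_mem (Finset.mem_univ _), Finset.card_univ,
          Fintype.card_fin]
      simp [hcard]
    calc (volume (Uset v ∩ Set.Ioc (v j) (v i))).toReal
        ≤ ((n - 1 : ℕ) : ℝ≥0∞).toReal := ENNReal.toReal_mono (by simp) hbound
      _ ≤ (n:ℝ) - 1 := by
          rw [ENNReal.toReal_natCast]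
          push_cast [Nat.cast_sub hn1]
          linarith

variable {d : ℕ}

lemma euclid_norm_eq (x : EuclideanSpace ℝ (Fin d)) : ‖x‖ = Real.sqrt (∑ k, (x k)^2) := by
  rw [EuclideanSpace.norm_eq]
  congr 1
  exact Finset.sum_congr rfl fun k _ => by rw [Real.norm_eq_abs, sq_abs]

lemma euclid_coord_le_norm (x : EuclideanSpace ℝ (Fin d)) (k : Fin d) : |x k| ≤ ‖x‖ := by
  rw [euclid_norm_eq, ← Real.sqrt_sq_eq_abs]
  exact Real.sqrt_le_sqrt (Finset.single_le_sum (f := fun k => (x k)^2)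
    (fun k _ => sq_nonneg _) (Finset.mem_univ k))

noncomputable def compress (hne : (Finset.univ : Finset (Fin n)).Nonempty)
    (y : Fin n → EuclideanSpace ℝ (Fin d)) : Fin n → EuclideanSpace ℝ (Fin d) :=
  fun i => (WithLp.equiv 2 (Fin d → ℝ)).symm
    (fun k => gmap (fun j => y j k) (y i k)
      - gmap (fun j => y j k) (Finset.univ.inf' hne (fun j => y j k)))

lemma compress_apply (hne : (Finset.univ : Finset (Fin n)).Nonempty)
    (y : Fin n → EuclideanSpace ℝ (Fin d)) (i : Fin n) (k : Fin d) :
    compress hne y i k = gmap (fun j => y j k) (y i k)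
      - gmap (fun j => y j k) (Finset.univ.inf' hne (fun j => y j k)) := rfl

lemma compress_mem (hne : (Finset.univ : Finset (Fin n)).Nonempty)
    (y : Fin n → EuclideanSpace ℝ (Fin d)) (i : Fin n) (k : Fin d) :
    compress hne y i k ∈ Set.Icc (0:ℝ) ((n:ℝ) - 1) := by
  rw [compress_apply]
  set v : Fin n → ℝ := fun j => y j k with hv
  constructor
  · have := gmap_mono v (Finset.inf'_le v (Finset.mem_univ i))
    linarith
  · obtain ⟨j₁, -, hj₁⟩ := Finset.exists_mem_eq_inf' hne v
    rw [hj₁]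
    exact gmap_span v i j₁

lemma compress_sub_apply (hne : (Finset.univ : Finset (Fin n)).Nonempty)
    (y : Fin n → EuclideanSpace ℝ (Fin d)) (i j : Fin n) (k : Fin d) :
    (compress hne y i - compress hne y j) k
      = gmap (fun l => y l k) (y i k) - gmap (fun l => y l k) (y j k) := by
  rw [PiLp.sub_apply, compress_apply, compress_apply]
  ring

lemma compress_coord_le (hne : (Finset.univ : Finset (Fin n)).Nonempty)
    (y : Fin n → EuclideanSpace ℝ (Fin d)) (i j : Fin n) (k : Fin d) :
    |(compress hne y i - compress hne y j) k| ≤ |(y i - y j) k| := by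
  rw [compress_sub_apply, PiLp.sub_apply]
  set v : Fin n → ℝ := fun l => y l k with hv
  rcases le_total (y j k) (y i k) with hle | hle
  · rw [abs_of_nonneg (by linarith [gmap_mono v hle] : (0:ℝ) ≤ gmap v (y i k) - gmap v (y j k)),
      abs_of_nonneg (by linarith : (0:ℝ) ≤ y i k - y j k)]
    exact gmap_lip v hle
  · rw [abs_sub_comm, abs_sub_comm (y i k),
      abs_of_nonneg (by linarith [gmap_mono v hle] : (0:ℝ) ≤ gmap v (y j k) - gmap v (y i k)),
      abs_of_nonneg (by linarith : (0:ℝ) ≤ y j k - y i k)]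
    exact gmap_lip v hle

lemma compress_coord_lower (hne : (Finset.univ : Finset (Fin n)).Nonempty)
    (y : Fin n → EuclideanSpace ℝ (Fin d)) (i j : Fin n) (k : Fin d) :
    min |(y i - y j) k| 1 ≤ |(compress hne y i - compress hne y j) k| := by
  rw [compress_sub_apply, PiLp.sub_apply]
  set v : Fin n → ℝ := fun l => y l k with hv
  rcases le_total (y j k) (y i k) with hle | hle
  · rw [abs_of_nonneg (by linarith [gmap_mono v hle] : (0:ℝ) ≤ gmap v (y i k) - gmap v (y j k)),
      abs_of_nonneg (by linarith : (0:ℝ) ≤ y i k - y j k)]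
    exact gmap_lower v j hle
  · rw [abs_sub_comm (y i k) (y j k), abs_sub_comm (gmap v (y i k)),
      abs_of_nonneg (by linarith [gmap_mono v hle] : (0:ℝ) ≤ gmap v (y j k) - gmap v (y i k)),
      abs_of_nonneg (by linarith : (0:ℝ) ≤ y j k - y i k)]
    exact gmap_lower v i hle

lemma compress_key (hne : (Finset.univ : Finset (Fin n)).Nonempty)
    (y : Fin n → EuclideanSpace ℝ (Fin d)) (i j : Fin n) :
    ‖compress hne y i - compress hne y j‖ ≤ ‖y i - y j‖ ∧
      (‖compress hne y i - compress hne y j‖ = ‖y i - y j‖ ∨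
        1 ≤ ‖compress hne y i - compress hne y j‖) := by
  have hle : ∀ k, |(compress hne y i - compress hne y j) k| ≤ |(y i - y j) k| :=
    compress_coord_le hne y i j
  have hlow : ∀ k, min |(y i - y j) k| 1 ≤ |(compress hne y i - compress hne y j) k| :=
    compress_coord_lower hne y i j
  have hsq : ∀ k, ((compress hne y i - compress hne y j) k)^2 ≤ ((y i - y j) k)^2 := by
    intro k
    rw [← sq_abs, ← sq_abs ((y i - y j) k)]
    exact pow_le_pow_left₀ (abs_nonneg _) (hle k) 2
  have hnorm : ‖compress hne y i - compress hne y j‖ ≤ ‖y i - y j‖ := by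
    rw [euclid_norm_eq, euclid_norm_eq]
    exact Real.sqrt_le_sqrt (Finset.sum_le_sum fun k _ => hsq k)
  refine ⟨hnorm, ?_⟩
  by_cases hc : ∀ k, |(compress hne y i - compress hne y j) k| = |(y i - y j) k|
  · left
    rw [euclid_norm_eq, euclid_norm_eq]
    congr 1
    refine Finset.sum_congr rfl fun k _ => ?_
    rw [← sq_abs, ← sq_abs ((y i - y j) k), hc k]
  · right
    push_neg at hc
    obtain ⟨k₀, hk₀⟩ := hc
    have hlt : |(compress hne y i - compress hne y j) k₀| < |(y i - y j) k₀| :=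
      lt_of_le_of_ne (hle k₀) hk₀
    have h1 : (1:ℝ) ≤ |(compress hne y i - compress hne y j) k₀| := by
      rcases le_total |(y i - y j) k₀| 1 with hcase | hcase
      · exfalso
        have := hlow k₀
        rw [min_eq_left hcase] at this
        linarith
      · have := hlow k₀
        rw [min_eq_right hcase] at this
        linarith
    exact h1.trans (euclid_coord_le_norm _ k₀)

end Compress

lemma En_eq (d n : ℕ) (α γ : ℝ) (x : Fin n → EuclideanSpace ℝ (Fin d)) :
    En d n α γ x = ∑ p : Fin n × Fin n,
      (if p.1 = p.2 then 0 else wfun α γ ‖x p.1 - x p.2‖) := by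
  rw [En, ← Finset.univ_product_univ, Finset.sum_product]
  rfl

theorem stmt_6 (d n : ℕ) (hd : 1 ≤ d) (hn : 2 ≤ n) (α γ : ℝ) (h : α < γ) (hγ : γ < 0) :
    ∃ x : Fin n → EuclideanSpace ℝ (Fin d), Function.Injective x ∧
      (∀ i k, x i k ∈ Set.Icc (0 : ℝ) (n - 1)) ∧
      En d n α γ x < 0 ∧
      ∀ y : Fin n → EuclideanSpace ℝ (Fin d), Function.Injective y →
        En d n α γ x ≤ En d n α γ y := by
  have hα' : α < 0 := h.trans hγ
  set w1 : ℝ := 1/γ - 1/α with hw1def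
  have hw1 : w1 < 0 := by
    have : w1 = (α - γ) / (γ * α) := by
      rw [hw1def, div_sub_div _ _ hγ.ne hα'.ne]
      ring_nf
    rw [this]
    exact div_neg_of_neg_of_pos (by linarith) (mul_pos_of_neg_of_neg hγ hα')
  set M : ℝ := (n:ℝ)^2 * (-w1) with hMdef
  obtain ⟨δ, hδ0, hδ1, hδ⟩ := wfun_small h hγ M
  have hne : (Finset.univ : Finset (Fin n)).Nonempty :=
    ⟨⟨0, by omega⟩, Finset.mem_univ _⟩
  -- the compact set
  set K : Set (Fin n → EuclideanSpace ℝ (Fin d)) :=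
    {x | (∀ i k, x i k ∈ Set.Icc (0:ℝ) ((n:ℝ) - 1)) ∧
      ∀ i j : Fin n, i ≠ j → δ ≤ ‖x i - x j‖} with hKdef
  -- the line configuration
  set k₀ : Fin d := ⟨0, hd⟩ with hk₀
  set z : Fin n → EuclideanSpace ℝ (Fin d) :=
    fun i => EuclideanSpace.single k₀ ((i:ℕ):ℝ) with hzdef
  have hz_coord : ∀ (i : Fin n) (k : Fin d), z i k = if k = k₀ then ((i:ℕ):ℝ) else 0 := by
    intro i k
    rw [hzdef]
    exact EuclideanSpace.single_apply k₀ _ k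
  have hz_dist : ∀ i j : Fin n, ‖z i - z j‖ = |((i:ℕ):ℝ) - ((j:ℕ):ℝ)| := by
    intro i j
    rw [euclid_norm_eq]
    have hcoord : ∀ k, ((z i - z j) k)^2
        = if k = k₀ then (((i:ℕ):ℝ) - ((j:ℕ):ℝ))^2 else 0 := by
      intro k
      rw [PiLp.sub_apply, hz_coord, hz_coord]
      by_cases hk : k = k₀ <;> simp [hk]
    rw [Finset.sum_congr rfl fun k _ => hcoord k, Finset.sum_ite_eq' Finset.univ k₀,
      if_pos (Finset.mem_univ _), Real.sqrt_sq_eq_abs]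
  have hz_dist1 : ∀ i j : Fin n, i ≠ j → 1 ≤ ‖z i - z j‖ := by
    intro i j hij
    rw [hz_dist]
    have hvne : (i:ℕ) ≠ (j:ℕ) := fun hc => hij (Fin.ext hc)
    have : 1 ≤ |((i:ℕ):ℤ) - ((j:ℕ):ℤ)| :=
      Int.one_le_abs (by omega : ((i:ℕ):ℤ) - ((j:ℕ):ℤ) ≠ 0)
    calc (1:ℝ) = ((1:ℤ):ℝ) := by norm_num
      _ ≤ |(((i:ℕ):ℤ):ℝ) - (((j:ℕ):ℤ):ℝ)| := by
          rw [← Int.cast_sub, ← Int.cast_abs]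
          exact_mod_cast this
      _ = |((i:ℕ):ℝ) - ((j:ℕ):ℝ)| := by norm_num
  have hcast_n1 : ((n-1:ℕ):ℝ) = (n:ℝ) - 1 := by
    push_cast [Nat.cast_sub (by omega : 1 ≤ n)]
    ring
  have hzK : z ∈ K := by
    constructor
    · intro i k
      rw [hz_coord]
      by_cases hk : k = k₀
      · rw [if_pos hk]
        refine ⟨by positivity, ?_⟩
        have hlt := i.isLt
        have h2 : ((i:ℕ):ℝ) ≤ ((n-1:ℕ):ℝ) := by exact_mod_cast (by omega : (i:ℕ) ≤ n - 1)
        linarith [hcast_n1]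
      · rw [if_neg hk]
        refine ⟨le_refl 0, ?_⟩
        have : (2:ℝ) ≤ (n:ℝ) := by exact_mod_cast hn
        linarith
    · intro i j hij
      exact le_trans hδ1.le (hz_dist1 i j hij)
  -- K is closed
  have hKclosed : IsClosed K := by
    rw [hKdef, Set.setOf_and]
    apply IsClosed.inter
    · have : {x : Fin n → EuclideanSpace ℝ (Fin d) | ∀ i k, x i k ∈ Set.Icc (0:ℝ) ((n:ℝ)-1)}
          = ⋂ (i : Fin n), ⋂ (k : Fin d), (fun x : Fin n → EuclideanSpace ℝ (Fin d) => x i k) ⁻¹'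
            (Set.Icc (0:ℝ) ((n:ℝ)-1)) := by
        ext x; simp [Set.mem_iInter]
      rw [this]
      refine isClosed_iInter fun i => isClosed_iInter fun k => IsClosed.preimage ?_ isClosed_Icc
      exact (EuclideanSpace.proj k).continuous.comp (continuous_apply i)
    · have : {x : Fin n → EuclideanSpace ℝ (Fin d) | ∀ i j : Fin n, i ≠ j → δ ≤ ‖x i - x j‖}
          = ⋂ (i : Fin n), ⋂ (j : Fin n),
            {x : Fin n → EuclideanSpace ℝ (Fin d) | i ≠ j → δ ≤ ‖x i - x j‖} := by
        ext x; simp [Set.mem_iInter]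
      rw [this]
      refine isClosed_iInter fun i => isClosed_iInter fun j => ?_
      by_cases hij : i = j
      · simp [hij]
      · have : {x : Fin n → EuclideanSpace ℝ (Fin d) | i ≠ j → δ ≤ ‖x i - x j‖}
            = {x : Fin n → EuclideanSpace ℝ (Fin d) | δ ≤ ‖x i - x j‖} := by
          ext x; simp [hij]
        rw [this]
        exact isClosed_le continuous_const (((continuous_apply i).sub (continuous_apply j)).norm)
  -- K is bounded
  have hKbounded : Bornology.IsBounded K := by
    rw [Metric.isBounded_iff_subset_closedBall 0]
    refine ⟨Real.sqrt ((d:ℝ) * (n:ℝ)^2), fun x hx => ?_⟩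
    rw [Metric.mem_closedBall, dist_zero_right]
    rw [pi_norm_le_iff_of_nonneg (Real.sqrt_nonneg _)]
    intro i
    rw [euclid_norm_eq]
    apply Real.sqrt_le_sqrt
    have hterm : ∀ k : Fin d, (x i k)^2 ≤ (n:ℝ)^2 := by
      intro k
      obtain ⟨h1, h2⟩ := hx.1 i k
      have hn' : (1:ℝ) ≤ (n:ℝ) := by exact_mod_cast (by omega : 1 ≤ n)
      apply sq_le_sq' <;> linarith
    calc ∑ k, (x i k)^2 ≤ ∑ k : Fin d, (n:ℝ)^2 := Finset.sum_le_sum fun k _ => hterm k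
      _ = (d:ℝ) * (n:ℝ)^2 := by rw [Finset.sum_const, Finset.card_univ, Fintype.card_fin,
            nsmul_eq_mul]
  have hKcompact : IsCompact K := Metric.isCompact_of_isClosed_isBounded hKclosed hKbounded
  -- En is continuous on K
  have hcont : ContinuousOn (En d n α γ) K := by
    unfold En
    apply continuousOn_finset_sum
    intro i _
    apply continuousOn_finset_sum
    intro j _
    by_cases hij : i = j
    · simpa [hij] using continuousOn_const
    · simp only [if_neg hij]
      have hnorm : ContinuousOn (fun x : Fin n → EuclideanSpace ℝ (Fin d) => ‖x i - x j‖) K :=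
        (((continuous_apply i).sub (continuous_apply j)).norm).continuousOn
      have hne0 : ∀ x ∈ K, ‖x i - x j‖ ≠ 0 := fun x hx =>
        ne_of_gt (lt_of_lt_of_le hδ0 (hx.2 i j hij))
      exact ((hnorm.rpow_const (fun x hx => Or.inl (hne0 x hx))).div_const γ).sub
        ((hnorm.rpow_const (fun x hx => Or.inl (hne0 x hx))).div_const α)
  -- energy of line configuration is negative
  have hEnz : En d n α γ z < 0 := by
    rw [En_eq]
    have hp₀ : ((⟨0, by omega⟩ : Fin n), (⟨1, by omega⟩ : Fin n)) ∈ (Finset.univ : Finset (Fin n × Fin n)) :=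
      Finset.mem_univ _
    have hp₀ne : (⟨0, by omega⟩ : Fin n) ≠ (⟨1, by omega⟩ : Fin n) := by
      intro hc
      exact absurd (congrArg Fin.val hc) (by norm_num)
    calc ∑ p : Fin n × Fin n, (if p.1 = p.2 then 0 else wfun α γ ‖z p.1 - z p.2‖)
        < ∑ _p : Fin n × Fin n, (0:ℝ) := by
          apply Finset.sum_lt_sum
          · intro p _
            by_cases hp : p.1 = p.2
            · simp [hp]
            · rw [if_neg hp]
              exact (wfun_neg h hγ (hz_dist1 p.1 p.2 hp)).le
          · refine ⟨_, hp₀, ?_⟩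
            rw [if_neg hp₀ne]
            exact wfun_neg h hγ (hz_dist1 _ _ hp₀ne)
      _ = 0 := Finset.sum_const_zero
  -- get the minimizer
  obtain ⟨xm, hxmK, hxmmin⟩ := hKcompact.exists_isMinOn ⟨z, hzK⟩ hcont
  have hxmmin' : ∀ y ∈ K, En d n α γ xm ≤ En d n α γ y := fun y hy => hxmmin hy
  have hEnxm : En d n α γ xm < 0 := lt_of_le_of_lt (hxmmin' z hzK) hEnz
  have hxm_inj : Function.Injective xm := by
    intro a b hab
    by_contra hne'
    have := hxmK.2 a b hne'
    rw [hab, sub_self, norm_zero] at this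
    linarith
  refine ⟨xm, hxm_inj, fun i k => hxmK.1 i k, hEnxm, ?_⟩
  intro y hy
  by_cases hbad : ∀ i j : Fin n, i ≠ j → δ ≤ ‖y i - y j‖
  · -- compress y into the cube
    have hkey := compress_key hne y
    have hy'K : compress hne y ∈ K := by
      constructor
      · exact fun i k => compress_mem hne y i k
      · intro i j hij
        rcases (hkey i j).2 with heq | h1
        · rw [heq]; exact hbad i j hij
        · linarith
    have h1 : En d n α γ xm ≤ En d n α γ (compress hne y) := hxmmin' _ hy'K
    have h2 : En d n α γ (compress hne y) ≤ En d n α γ y := by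
      rw [En_eq, En_eq]
      apply Finset.sum_le_sum
      intro p _
      by_cases hp : p.1 = p.2
      · simp [hp]
      · rw [if_neg hp, if_neg hp]
        obtain ⟨hle, heq1⟩ := hkey p.1 p.2
        rcases heq1 with heq | hge1
        · rw [heq]
        · exact wfun_monoOn h hγ (Set.mem_Ici.mpr hge1) (Set.mem_Ici.mpr (hge1.trans hle)) hle
    linarith
  · -- y has a very close pair, so its energy is positive
    push_neg at hbad
    obtain ⟨i₀, j₀, hij₀, hlt⟩ := hbad
    have hr₀ : 0 < ‖y i₀ - y j₀‖ := by
      rw [norm_sub_pos_iff]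
      exact fun hc => hij₀ (hy hc)
    have hM : M ≤ wfun α γ ‖y i₀ - y j₀‖ := hδ _ hr₀ hlt.le
    have hbound : (n:ℝ)^2 * w1 + 2 * (M - w1) ≤ En d n α γ y := by
      rw [En_eq]
      set T : Finset (Fin n × Fin n) := {(i₀, j₀), (j₀, i₀)} with hT
      have hTcard : T.card = 2 := by
        rw [hT, Finset.card_insert_of_notMem (by simp [Prod.ext_iff]; exact fun hc => absurd hc hij₀),
          Finset.card_singleton]
      have hpt : ∀ p : Fin n × Fin n,
          w1 + (if p ∈ T then (M - w1) else 0)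
            ≤ (if p.1 = p.2 then 0 else wfun α γ ‖y p.1 - y p.2‖) := by
        intro p
        by_cases hpT : p ∈ T
        · rw [if_pos hpT]
          rw [hT] at hpT
          simp only [Finset.mem_insert, Finset.mem_singleton] at hpT
          rcases hpT with rfl | rfl
          · rw [if_neg hij₀]
            linarith
          · rw [if_neg (Ne.symm hij₀), norm_sub_rev]
            linarith
        · rw [if_neg hpT, add_zero]
          by_cases hdg : p.1 = p.2
          · rw [if_pos hdg]
            linarith
          · rw [if_neg hdg]
            rw [hw1def]
            apply wfun_min h hγ
            rw [norm_sub_pos_iff]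
            exact fun hc => hdg (hy hc)
      calc (n:ℝ)^2 * w1 + 2 * (M - w1)
          = ∑ p : Fin n × Fin n, (w1 + (if p ∈ T then (M - w1) else 0)) := by
            rw [Finset.sum_add_distrib, Finset.sum_const, Finset.sum_ite_mem, Finset.univ_inter,
              Finset.sum_const, hTcard, Finset.card_univ, Fintype.card_prod, Fintype.card_fin,
              nsmul_eq_mul, nsmul_eq_mul]
            push_cast
            ring
        _ ≤ _ := Finset.sum_le_sum fun p _ => hpt p
    have hfin : 0 < En d n α γ y := by
      have hexp : (n:ℝ)^2 * w1 + 2 * (M - w1) = -((n:ℝ)^2 + 2) * w1 := by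
        rw [hMdef]; ring
      have hnpos : (0:ℝ) < (n:ℝ)^2 + 2 := by positivity
      nlinarith
    linarith
end

section
/- Suppose γ ≥ 2 and 1 ≤ α < γ. Any global minimizer (x_1,…,x_n) of E_n in (ℝ^d)^n has diameter max_{i,j}|x_i − x_j| ≤ (2/min(C_γ,1))^{1/(γ−α)}, where C_γ is the constant in the monotonicity inequality ⟨|η|^{γ−2}η − |ξ|^{γ−2}ξ, η−ξ⟩ ≥ C_γ|η−ξ|^γ. In particular the bound is independent of n. -/
open Finset

lemma aux_sum {n : ℕ} (i : Fin n) (h : Fin n → Fin n → ℝ)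
    (h0 : ∀ a b, a ≠ i → b ≠ i → h a b = 0) (hii : h i i = 0) :
    ∑ a, ∑ b, h a b = (∑ b, h i b) + ∑ a, h a i := by
  rw [← Finset.add_sum_erase _ _ (Finset.mem_univ i)]
  congr 1
  rw [← Finset.add_sum_erase _ (fun a => h a i) (Finset.mem_univ i), hii, zero_add]
  apply Finset.sum_congr rfl
  intro a ha
  have hai : a ≠ i := Finset.ne_of_mem_erase ha
  exact Finset.sum_eq_single_of_mem i (Finset.mem_univ i) (fun b _ hb => h0 a b hai hb)

lemma update_diff {d n : ℕ} (α γ : ℝ) (x : Fin n → EuclideanSpace ℝ (Fin d)) (i j : Fin n) :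
    En d n α γ (Function.update x i (x j)) - En d n α γ x
      = 2 * ∑ b, (if b = i then 0 else
          (‖x j - x b‖ ^ γ / γ - ‖x j - x b‖ ^ α / α)
            - (‖x i - x b‖ ^ γ / γ - ‖x i - x b‖ ^ α / α)) := by
  classical
  set w : ℝ → ℝ := fun r => r ^ γ / γ - r ^ α / α with hw
  set y := Function.update x i (x j) with hy
  have hEx : En d n α γ x = ∑ a, ∑ b, (if a = b then 0 else w ‖x a - x b‖) := rfl
  have hEy : En d n α γ y = ∑ a, ∑ b, (if a = b then 0 else w ‖y a - y b‖) := rfl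
  set h : Fin n → Fin n → ℝ := fun a b =>
    (if a = b then 0 else w ‖y a - y b‖) - (if a = b then 0 else w ‖x a - x b‖) with hh
  have key : En d n α γ y - En d n α γ x = ∑ a, ∑ b, h a b := by
    rw [hEx, hEy, ← Finset.sum_sub_distrib]
    apply Finset.sum_congr rfl
    intro a _
    rw [← Finset.sum_sub_distrib]
  rw [key, aux_sum i h ?h0 ?hii]
  case h0 =>
    intro a b ha hb
    simp only [hh, hy, Function.update_of_ne ha, Function.update_of_ne hb, sub_self]
  case hii => simp [hh]
  have e1 : ∀ b, h i b = (if b = i then 0 else w ‖x j - x b‖ - w ‖x i - x b‖) := by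
    intro b
    by_cases hbi : b = i
    · simp [hh, hbi]
    · simp [hh, hy, Function.update_of_ne hbi, Ne.symm hbi, hbi]
  have e2 : ∀ a, h a i = (if a = i then 0 else w ‖x j - x a‖ - w ‖x i - x a‖) := by
    intro a
    by_cases hai : a = i
    · simp [hh, hai]
    · simp only [hh, hy, Function.update_self, Function.update_of_ne hai, if_neg hai]
      rw [norm_sub_rev (x a) (x j), norm_sub_rev (x a) (x i)]
  simp only [e1, e2]
  ring

theorem stmt_10 (d n : ℕ) (α γ : ℝ) (hα : 1 ≤ α) (h : α < γ) (hγ : 2 ≤ γ)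
    (C : ℝ) (hC : 0 < C)
    (hineq : ∀ η ξ : EuclideanSpace ℝ (Fin d),
      (inner ℝ (‖η‖ ^ (γ - 2) • η - ‖ξ‖ ^ (γ - 2) • ξ) (η - ξ) : ℝ) ≥ C * ‖η - ξ‖ ^ γ)
    (x : Fin n → EuclideanSpace ℝ (Fin d))
    (hmin : ∀ y : Fin n → EuclideanSpace ℝ (Fin d), En d n α γ x ≤ En d n α γ y) :
    ∀ i j, ‖x i - x j‖ ≤ (2 / min C 1) ^ (1 / (γ - α)) := by
  classical
  intro i j
  set r := ‖x i - x j‖ with hrdef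
  have hr0 : 0 ≤ r := norm_nonneg _
  have hmpos : (0:ℝ) < min C 1 := lt_min hC one_pos
  have hB : (0:ℝ) < 2 / min C 1 := by positivity
  have hγα : (0:ℝ) < γ - α := sub_pos.mpr h
  have hγ0 : (0:ℝ) < γ := by linarith
  have hα0 : (0:ℝ) < α := by linarith
  rcases eq_or_lt_of_le hr0 with h0 | hrpos
  · rw [← h0]
    exact (Real.rpow_pos_of_pos hB _).le
  -- i ≠ j
  have hij : i ≠ j := by
    rintro rfl
    simp [hrdef] at hrpos
  -- C is small: C * 2^γ ≤ 4
  set e : EuclideanSpace ℝ (Fin d) := r⁻¹ • (x i - x j) with he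
  have hnorme : ‖e‖ = 1 := by
    rw [he, norm_smul, Real.norm_eq_abs, abs_of_pos (inv_pos.mpr hrpos), ← hrdef]
    field_simp
  have hC4 : C * (2:ℝ) ^ γ ≤ 4 := by
    have hin := hineq e (-e)
    have h2e : e + e = (2:ℝ) • e := by module
    rw [norm_neg, hnorme, Real.one_rpow, one_smul, one_smul, sub_neg_eq_add, h2e] at hin
    have hinn : (inner ℝ ((2:ℝ) • e) ((2:ℝ) • e) : ℝ) = 4 := by
      rw [real_inner_smul_left, real_inner_smul_right, real_inner_self_eq_norm_sq, hnorme]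
      norm_num
    have hn2 : ‖(2:ℝ) • e‖ = 2 := by
      rw [norm_smul, hnorme, Real.norm_eq_abs]
      norm_num
    rw [hinn, hn2] at hin
    linarith
  -- Bernoulli: γ ≤ 2^(γ-1), hence C * γ ≤ 2
  have hbern : γ ≤ (2:ℝ) ^ (γ - 1) := by
    have := one_add_mul_self_le_rpow_one_add (by norm_num : (-1:ℝ) ≤ 1)
      (by linarith : (1:ℝ) ≤ γ - 1)
    norm_num at this
    linarith
  have h2γ : 2 * γ ≤ (2:ℝ) ^ γ := by
    have h2e : (2:ℝ) ^ γ = 2 * (2:ℝ) ^ (γ - 1) := by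
      rw [show γ = 1 + (γ - 1) by ring, Real.rpow_add two_pos, Real.rpow_one]
      ring_nf
    rw [h2e]
    linarith
  have hCγ : C * γ ≤ 2 := by nlinarith
  -- minimality: w r ≤ 0
  have d1 := update_diff α γ x i j
  have d2 := update_diff α γ x j i
  set w : ℝ → ℝ := fun s => s ^ γ / γ - s ^ α / α with hw
  have hw0 : w 0 = 0 := by
    simp [hw, Real.zero_rpow (by linarith : γ ≠ 0), Real.zero_rpow (by linarith : α ≠ 0)]
  set G : Fin n → ℝ := fun b => if b = i then 0 else w ‖x j - x b‖ - w ‖x i - x b‖ with hG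
  set G' : Fin n → ℝ := fun b => if b = j then 0 else w ‖x i - x b‖ - w ‖x j - x b‖ with hG'
  have m1 : 0 ≤ 2 * ∑ b, G b := by
    rw [← d1]
    linarith [hmin (Function.update x i (x j))]
  have m2 : 0 ≤ 2 * ∑ b, G' b := by
    rw [← d2]
    linarith [hmin (Function.update x j (x i))]
  have hsum : (∑ b, G b) + (∑ b, G' b) = -2 * w r := by
    rw [← Finset.sum_add_distrib]
    have hz : ∀ b ∈ Finset.univ, b ∉ ({i, j} : Finset (Fin n)) → G b + G' b = 0 := by
      intro b _ hb
      simp only [Finset.mem_insert, Finset.mem_singleton, not_or] at hb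
      simp only [hG, hG', if_neg hb.1, if_neg hb.2]
      ring
    rw [← Finset.sum_subset (Finset.subset_univ ({i, j} : Finset (Fin n))) hz,
      Finset.sum_pair hij]
    have hGi : G i = 0 := by simp [hG]
    have hGj' : G' j = 0 := by simp [hG']
    have hGi' : G' i = w 0 - w r := by
      simp only [hG', if_neg hij, hrdef]
      rw [norm_sub_rev (x j) (x i), sub_self, norm_zero]
    have hGj : G j = w 0 - w r := by
      simp only [hG, if_neg (Ne.symm hij), hrdef, sub_self, norm_zero]
    rw [hGi, hGj', hGi', hGj, hw0]
    ring
  have hwr : w r ≤ 0 := by linarith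
  -- conclude
  have hrγα : r ^ (γ - α) ≤ 2 / min C 1 := by
    have h1 : r ^ γ * α ≤ r ^ α * γ := by
      have hd : r ^ γ / γ ≤ r ^ α / α := by
        simp only [hw] at hwr
        linarith
      rw [div_le_div_iff₀ hγ0 hα0] at hd
      linarith
    have h2 : r ^ (γ - α) ≤ γ / α := by
      rw [Real.rpow_sub hrpos, div_le_div_iff₀ (Real.rpow_pos_of_pos hrpos α) hα0]
      linarith
    have h3 : γ / α ≤ 2 / min C 1 := by
      rw [div_le_div_iff₀ hα0 hmpos]
      have hm1 : min C 1 ≤ C := min_le_left _ _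
      nlinarith [min_le_left C 1, hmpos.le]
    linarith
  calc r = (r ^ (γ - α)) ^ (γ - α)⁻¹ := by
        rw [← Real.rpow_mul hr0, mul_inv_cancel₀ (ne_of_gt hγα), Real.rpow_one]
    _ ≤ (2 / min C 1) ^ (γ - α)⁻¹ :=
        Real.rpow_le_rpow (Real.rpow_nonneg hr0 _) hrγα (by positivity)
    _ = (2 / min C 1) ^ (1 / (γ - α)) := by rw [one_div]
end

section
/- Suppose 1 ≤ α < γ < 2. Any global minimizer (x_1,…,x_n) of E_n in (ℝ^d)^n has diameter bounded by (2/min(2^{γ−2}c_γ, 1))^{1/(γ−α)}, where c_γ is the constant in the inequality ⟨|η|^{γ−2}η − |ξ|^{γ−2}ξ, η−ξ⟩ ≥ c_γ(|η|+|ξ|)^{γ−2}|η−ξ|². The bound is independent of n. -/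
open Finset Real
open scoped RealInnerProductSpace

variable {E : Type*} [NormedAddCommGroup E] [InnerProductSpace ℝ E]

lemma norm_affine (v u : E) (t : ℝ) :
    ‖v + t • u‖ = Real.sqrt (‖v‖ ^ 2 + 2 * ⟪v, u⟫ * t + ‖u‖ ^ 2 * t ^ 2) := by
  rw [← Real.sqrt_sq (norm_nonneg (v + t • u)), norm_add_sq_real]
  congr 1
  rw [real_inner_smul_right, norm_smul]
  rw [Real.norm_eq_abs, mul_pow, sq_abs]
  ring

lemma hasDerivAt_norm_affine (v u : E) (hv : v ≠ 0) :
    HasDerivAt (fun t : ℝ => ‖v + t • u‖) (⟪v, u⟫ / ‖v‖) 0 := by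
  have hq : HasDerivAt (fun t : ℝ => ‖v‖ ^ 2 + 2 * ⟪v, u⟫ * t + ‖u‖ ^ 2 * t ^ 2)
      (2 * ⟪v, u⟫) 0 := by
    have h1 : HasDerivAt (fun t : ℝ => ‖v‖ ^ 2 + 2 * ⟪v, u⟫ * t + ‖u‖ ^ 2 * t ^ 2)
        (0 + 2 * ⟪v, u⟫ * 1 + ‖u‖ ^ 2 * (2 * 0 ^ 1)) 0 := by
      exact (((hasDerivAt_const _ _).add ((hasDerivAt_id 0).const_mul _)).add
        (((hasDerivAt_pow 2 0)).const_mul _))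
    simpa using h1
  have hs : HasDerivAt Real.sqrt (1 / (2 * Real.sqrt (‖v‖ ^ 2 + 2 * ⟪v, u⟫ * 0 + ‖u‖ ^ 2 * 0 ^ 2))) (‖v‖ ^ 2 + 2 * ⟪v, u⟫ * 0 + ‖u‖ ^ 2 * 0 ^ 2) := by
    apply Real.hasDerivAt_sqrt
    simpa using pow_ne_zero 2 (norm_ne_zero_iff.mpr hv)
  have := hs.comp 0 hq
  have hnv : Real.sqrt (‖v‖ ^ 2 + 2 * ⟪v, u⟫ * 0 + ‖u‖ ^ 2 * 0 ^ 2) = ‖v‖ := by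
    simp [Real.sqrt_sq (norm_nonneg v)]
  rw [hnv] at this
  have heq : (fun t : ℝ => ‖v + t • u‖) = (Real.sqrt ∘ fun t : ℝ => ‖v‖ ^ 2 + 2 * ⟪v, u⟫ * t + ‖u‖ ^ 2 * t ^ 2) := by
    funext t; exact norm_affine v u t
  rw [heq]
  refine this.congr_deriv ?_
  field_simp

lemma hasDerivAt_rpow_norm_affine (s : ℝ) (v u : E) (hv : v ≠ 0 ∨ 1 < s) :
    HasDerivAt (fun t : ℝ => ‖v + t • u‖ ^ s) (s * (‖v‖ ^ (s - 2) * ⟪v, u⟫)) 0 := by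
  rcases eq_or_ne v 0 with rfl | hv0
  · have hs : 1 < s := hv.resolve_left (by simp)
    have hs0 : s ≠ 0 := by linarith
    have hkey : HasDerivAt (fun t : ℝ => ‖(0 : E) + t • u‖ ^ s) 0 0 := by
      rw [hasDerivAt_iff_isLittleO]
      have hsimp : (fun t : ℝ => ‖(0 : E) + t • u‖ ^ s - ‖(0 : E) + (0:ℝ) • u‖ ^ s - (t - 0) • (0:ℝ))
          = fun t : ℝ => |t| ^ s * ‖u‖ ^ s := by
        funext t
        simp [norm_smul, Real.zero_rpow hs0, Real.mul_rpow (abs_nonneg t) (norm_nonneg u)]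
      rw [hsimp]
      have hbound : ∀ t : ℝ, ‖|t| ^ s * ‖u‖ ^ s / (t - 0)‖ ≤ |t| ^ (s - 1) * ‖u‖ ^ s := by
        intro t
        rcases eq_or_ne t 0 with rfl | ht
        · simp [Real.zero_rpow hs0]
          positivity
        · have habs : |t| ≠ 0 := abs_ne_zero.mpr ht
          have : |t| ^ s = |t| ^ (s - 1) * |t| := by
            rw [← Real.rpow_add_one habs]; ring_nf
          rw [sub_zero, this, Real.norm_eq_abs, abs_div, abs_mul, abs_mul, abs_abs]
          rw [abs_of_nonneg (Real.rpow_nonneg (abs_nonneg t) _),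
            abs_of_nonneg (Real.rpow_nonneg (norm_nonneg u) _)]
          rw [mul_right_comm, mul_div_assoc, div_self habs, mul_one]
        
      have htend : Filter.Tendsto (fun t : ℝ => |t| ^ (s - 1) * ‖u‖ ^ s) (nhds 0) (nhds 0) := by
        have h1 : Filter.Tendsto (fun t : ℝ => |t| ^ (s - 1)) (nhds 0) (nhds 0) := by
          have hc : ContinuousAt (fun r : ℝ => r ^ (s - 1)) 0 :=
            Real.continuousAt_rpow_const 0 (s - 1) (Or.inr (by linarith))
          have habs0 : Filter.Tendsto (fun t : ℝ => |t|) (nhds 0) (nhds (0:ℝ)) := by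
            simpa using continuous_abs.tendsto (0:ℝ)
          have h2 := hc.tendsto.comp habs0
          simpa [Function.comp_def, Real.zero_rpow (show s - 1 ≠ 0 by linarith)] using h2
        simpa using h1.mul_const (‖u‖ ^ s)
      apply Asymptotics.IsLittleO.of_norm_left
      rw [Asymptotics.isLittleO_iff_tendsto]
      · apply squeeze_zero_norm _ htend
        intro t
        simpa using hbound t
      · intro t ht
        rw [sub_eq_zero] at ht
        simp [ht, abs_nonneg, Real.zero_rpow hs0]
    convert hkey using 1
    simp
  · have hn : ‖v‖ ≠ 0 := norm_ne_zero_iff.mpr hv0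
    have h1 : HasDerivAt (fun r : ℝ => r ^ s) (s * ‖v + (0:ℝ) • u‖ ^ (s - 1)) ‖v + (0:ℝ) • u‖ := by
      apply Real.hasDerivAt_rpow_const
      left; simpa using hn
    have h2 := h1.comp 0 (hasDerivAt_norm_affine v u hv0)
    have h3 : HasDerivAt (fun t : ℝ => ‖v + t • u‖ ^ s)
        (s * ‖v‖ ^ (s - 1) * (⟪v, u⟫ / ‖v‖)) 0 := by simpa [Function.comp_def] using h2
    convert h3 using 1
    have : ‖v‖ ^ (s - 1) = ‖v‖ ^ (s - 2) * ‖v‖ := by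
      rw [← Real.rpow_add_one hn]; ring_nf
    rw [this]; field_simp

lemma hasDerivAt_wterm (α γ : ℝ) (hα : 0 < α) (hγ : 0 < γ) (v u : E)
    (hvα : v ≠ 0 ∨ 1 < α) (hvγ : v ≠ 0 ∨ 1 < γ) :
    HasDerivAt (fun t : ℝ => ‖v + t • u‖ ^ γ / γ - ‖v + t • u‖ ^ α / α)
      ((‖v‖ ^ (γ - 2) - ‖v‖ ^ (α - 2)) * ⟪v, u⟫) 0 := by
  have h1 := (hasDerivAt_rpow_norm_affine γ v u hvγ).div_const γ
  have h2 := (hasDerivAt_rpow_norm_affine α v u hvα).div_const α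
  refine (h1.fun_sub h2).congr_deriv ?_
  field_simp

lemma double_sum_update {n : ℕ} (g : Fin n → Fin n → ℝ) (p : Fin n) :
    ∑ i, ∑ j, g i j = (∑ i ∈ univ.erase p, ∑ j ∈ univ.erase p, g i j)
      + ((∑ k ∈ univ.erase p, (g p k + g k p)) + g p p) := by
  have A : ∑ i ∈ univ.erase p, (∑ j, g i j)
      = ∑ i ∈ univ.erase p, ((∑ j ∈ univ.erase p, g i j) + g i p) :=
    Finset.sum_congr rfl (fun i _ => (Finset.sum_erase_add univ (g i) (mem_univ p)).symm)
  rw [← Finset.sum_erase_add univ (fun i => ∑ j, g i j) (mem_univ p), A,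
    Finset.sum_add_distrib, ← Finset.sum_erase_add univ (g p) (mem_univ p),
    Finset.sum_add_distrib]
  ring

lemma En_update (d n : ℕ) (α γ : ℝ) (x : Fin n → EuclideanSpace ℝ (Fin d)) (p : Fin n)
    (z : EuclideanSpace ℝ (Fin d)) :
    En d n α γ (Function.update x p z) =
      (∑ k ∈ univ.erase p, 2 * (‖z - x k‖ ^ γ / γ - ‖z - x k‖ ^ α / α)) +
      ∑ i ∈ univ.erase p, ∑ j ∈ univ.erase p,
        (if i = j then 0 else ‖x i - x j‖ ^ γ / γ - ‖x i - x j‖ ^ α / α) := by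
  unfold En
  rw [double_sum_update _ p]
  have h1 : ∀ i ∈ univ.erase p, ∀ j ∈ univ.erase p,
      (if i = j then 0 else ‖Function.update x p z i - Function.update x p z j‖ ^ γ / γ
        - ‖Function.update x p z i - Function.update x p z j‖ ^ α / α)
      = (if i = j then 0 else ‖x i - x j‖ ^ γ / γ - ‖x i - x j‖ ^ α / α) := by
    intro i hi j hj
    rw [Function.update_of_ne (Finset.ne_of_mem_erase hi), Function.update_of_ne (Finset.ne_of_mem_erase hj)]
  have h2 : ∀ k ∈ univ.erase p,
      ((if p = k then 0 else ‖Function.update x p z p - Function.update x p z k‖ ^ γ / γ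
        - ‖Function.update x p z p - Function.update x p z k‖ ^ α / α)
      + (if k = p then 0 else ‖Function.update x p z k - Function.update x p z p‖ ^ γ / γ
        - ‖Function.update x p z k - Function.update x p z p‖ ^ α / α))
      = 2 * (‖z - x k‖ ^ γ / γ - ‖z - x k‖ ^ α / α) := by
    intro k hk
    have hkp : k ≠ p := Finset.ne_of_mem_erase hk
    rw [if_neg (Ne.symm hkp), if_neg hkp, Function.update_self,
      Function.update_of_ne hkp, norm_sub_rev (x k) z]
    ring
  rw [Finset.sum_congr rfl (fun i hi => Finset.sum_congr rfl (h1 i hi)),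
    Finset.sum_congr rfl h2, if_pos rfl]
  ring

lemma hasDerivAt_En_dir (d n : ℕ) (α γ : ℝ) (hα : 0 < α) (hγ : 1 < γ)
    (x : Fin n → EuclideanSpace ℝ (Fin d)) (p : Fin n) (u : EuclideanSpace ℝ (Fin d))
    (hsep : ∀ k ∈ univ.erase p, (x p - x k ≠ 0 ∨ 1 < α)) :
    HasDerivAt (fun t : ℝ => En d n α γ (Function.update x p (x p + t • u)))
      (∑ k ∈ univ.erase p, 2 * ((‖x p - x k‖ ^ (γ - 2) - ‖x p - x k‖ ^ (α - 2)) * ⟪x p - x k, u⟫)) 0 := by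
  have heq : (fun t : ℝ => En d n α γ (Function.update x p (x p + t • u)))
      = fun t : ℝ => (∑ k ∈ univ.erase p,
          2 * (‖(x p - x k) + t • u‖ ^ γ / γ - ‖(x p - x k) + t • u‖ ^ α / α)) +
        ∑ i ∈ univ.erase p, ∑ j ∈ univ.erase p,
          (if i = j then 0 else ‖x i - x j‖ ^ γ / γ - ‖x i - x j‖ ^ α / α) := by
    funext t
    rw [En_update]
    congr 1
    apply Finset.sum_congr rfl
    intro k _
    have : x p + t • u - x k = (x p - x k) + t • u := by abel
    rw [this]
  rw [heq]
  apply HasDerivAt.add_const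
  apply HasDerivAt.fun_sum
  intro k hk
  exact (hasDerivAt_wterm α γ hα (by linarith) (x p - x k) u (hsep k hk) (Or.inr hγ)).const_mul 2

lemma first_order (d n : ℕ) (α γ : ℝ) (hα : 0 < α) (hγ : 1 < γ)
    (x : Fin n → EuclideanSpace ℝ (Fin d))
    (hmin : ∀ y : Fin n → EuclideanSpace ℝ (Fin d), En d n α γ x ≤ En d n α γ y)
    (p : Fin n) (u : EuclideanSpace ℝ (Fin d))
    (hsep : ∀ k ∈ univ.erase p, (x p - x k ≠ 0 ∨ 1 < α)) :
    ∑ k, (‖x p - x k‖ ^ (γ - 2) - ‖x p - x k‖ ^ (α - 2)) * ⟪x p - x k, u⟫ = 0 := by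
  have hD := hasDerivAt_En_dir d n α γ hα hγ x p u hsep
  have hloc : IsLocalMin (fun t : ℝ => En d n α γ (Function.update x p (x p + t • u))) 0 := by
    apply Filter.Eventually.of_forall
    intro t
    have h0 : Function.update x p (x p + (0:ℝ) • u) = x := by
      simp [Function.update_eq_self]
    simp only [h0]
    exact hmin _
  have hz := hloc.hasDerivAt_eq_zero hD
  have hz2 : (2:ℝ) * ∑ k ∈ univ.erase p, ((‖x p - x k‖ ^ (γ - 2) - ‖x p - x k‖ ^ (α - 2)) * ⟪x p - x k, u⟫) = 0 := by
    rw [Finset.mul_sum]; exact hz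
  have hsum := (mul_eq_zero.mp hz2).resolve_left two_ne_zero
  rw [← Finset.sum_erase univ (a := p) (by simp)] 
  exact hsum

lemma separated (d n : ℕ) (γ : ℝ) (hγ1 : 1 < γ) (hd : 0 < d)
    (x : Fin n → EuclideanSpace ℝ (Fin d))
    (hmin : ∀ y : Fin n → EuclideanSpace ℝ (Fin d), En d n 1 γ x ≤ En d n 1 γ y)
    (p k : Fin n) (hk : k ≠ p) : x k ≠ x p := by
  classical
  intro hke
  have hγ0 : (γ:ℝ) ≠ 0 := by linarith
  set T : Finset (Fin n) := (univ.erase p).filter (fun m => x m ≠ x p) with hT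
  set S : Finset (Fin n) := (univ.erase p).filter (fun m => x m = x p) with hS
  set G : EuclideanSpace ℝ (Fin d) :=
    ∑ m ∈ T, (‖x p - x m‖ ^ (γ - 2) - ‖x p - x m‖ ^ ((1:ℝ) - 2)) • (x p - x m) with hG
  set v : EuclideanSpace ℝ (Fin d) :=
    if G = 0 then EuclideanSpace.single (⟨0, hd⟩ : Fin d) (1:ℝ) else -G with hv
  have hvne : v ≠ 0 := by
    rcases eq_or_ne G 0 with h | h
    · rw [hv, if_pos h]
      intro hz
      have := congrArg (fun w => w (⟨0, hd⟩ : Fin d)) hz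
      rw [EuclideanSpace.single_apply, if_pos rfl] at this
      simpa using this
    · rw [hv, if_neg h]
      simpa using h
  have hGv : ⟪G, v⟫ ≤ 0 := by
    rcases eq_or_ne G 0 with h | h
    · rw [h]; simp
    · rw [hv, if_neg h, inner_neg_right]
      simpa using real_inner_self_nonneg (x := G)
  have hvpos : 0 < ‖v‖ := norm_pos_iff.mpr hvne
  -- the smooth part
  set φ : ℝ → ℝ := fun t => ∑ m ∈ T,
    2 * (‖(x p - x m) + t • v‖ ^ γ / γ - ‖(x p - x m) + t • v‖ ^ (1:ℝ) / 1) with hφdef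
  have hφ : HasDerivAt φ (2 * ⟪G, v⟫) 0 := by
    have h1 : HasDerivAt φ (∑ m ∈ T,
        2 * ((‖x p - x m‖ ^ (γ - 2) - ‖x p - x m‖ ^ ((1:ℝ) - 2)) * ⟪x p - x m, v⟫)) 0 := by
      apply HasDerivAt.fun_sum
      intro m hm
      have hne : x p - x m ≠ 0 := by
        rw [hT] at hm
        simp only [Finset.mem_filter] at hm
        exact sub_ne_zero_of_ne (Ne.symm hm.2)
      exact (hasDerivAt_wterm 1 γ one_pos (by linarith) (x p - x m) v (Or.inl hne) (Or.inr hγ1)).const_mul 2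
    convert h1 using 1
    rw [hG, sum_inner, Finset.mul_sum]
    apply Finset.sum_congr rfl
    intro m _
    rw [real_inner_smul_left]
    try ring
  -- decomposition of the energy along the path
  set g : ℝ → ℝ := fun t => En d n 1 γ (Function.update x p (x p + t • v)) with hgdef
  set C : ℝ := ∑ i ∈ univ.erase p, ∑ j ∈ univ.erase p,
      (if i = j then 0 else ‖x i - x j‖ ^ γ / γ - ‖x i - x j‖ ^ (1:ℝ) / 1) with hC
  have hg : ∀ t : ℝ, g t = φ t + (S.card : ℝ) * (2 * (‖t • v‖ ^ γ / γ - ‖t • v‖ ^ (1:ℝ) / 1)) + C := by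
    intro t
    rw [hgdef]
    simp only
    rw [En_update]
    congr 1
    rw [← Finset.sum_filter_add_sum_filter_not (univ.erase p) (fun m => x m ≠ x p)]
    have hSS : (univ.erase p).filter (fun m => ¬ x m ≠ x p) = S := by
      rw [hS]; apply Finset.filter_congr; intro m _; simp
    rw [hSS]
    congr 1
    · apply Finset.sum_congr rfl
      intro m _
      have : x p + t • v - x m = (x p - x m) + t • v := by abel
      rw [this]
    · rw [Finset.sum_congr rfl (g := fun m => 2 * (‖t • v‖ ^ γ / γ - ‖t • v‖ ^ (1:ℝ) / 1)) ?_, Finset.sum_const, nsmul_eq_mul]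
      intro m hm
      rw [hS] at hm
      simp only [Finset.mem_filter] at hm
      rw [hm.2]
      congr 2 <;> rw [show x p + t • v - x p = t • v by abel]
  have hg0 : g 0 = φ 0 + C := by
    rw [hg 0]
    norm_num [Real.zero_rpow hγ0]
  -- slope nonneg on the right, limit negative
  have hmono : nhdsWithin (0:ℝ) (Set.Ioi 0) ≤ nhdsWithin (0:ℝ) {(0:ℝ)}ᶜ := by
    apply nhdsWithin_mono
    intro t ht
    simp only [Set.mem_Ioi] at ht
    simp [ne_of_gt ht]
  have hslopeφ : Filter.Tendsto (fun t => (φ t - φ 0) / t) (nhdsWithin (0:ℝ) (Set.Ioi 0))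
      (nhds (2 * ⟪G, v⟫)) := by
    have := (hasDerivAt_iff_tendsto_slope.mp hφ).mono_left hmono
    apply this.congr
    intro t
    rw [slope_def_field]
    simp [div_eq_inv_mul]
    try ring
  have hslopeS : Filter.Tendsto
      (fun t => ((S.card : ℝ) * (2 * (‖t • v‖ ^ γ / γ - ‖t • v‖ ^ (1:ℝ) / 1))) / t)
      (nhdsWithin (0:ℝ) (Set.Ioi 0)) (nhds ((S.card : ℝ) * (2 * (0 * ‖v‖ ^ γ / γ - ‖v‖)))) := by
    have hbase : Filter.Tendsto (fun t : ℝ => t ^ (γ - 1)) (nhdsWithin (0:ℝ) (Set.Ioi 0)) (nhds 0) := by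
      have hc : ContinuousAt (fun r : ℝ => r ^ (γ - 1)) 0 :=
        Real.continuousAt_rpow_const 0 (γ - 1) (Or.inr (by linarith))
      have h2 := hc.tendsto.mono_left (nhdsWithin_le_nhds (s := Set.Ioi (0:ℝ)))
      simpa [Real.zero_rpow (show γ - 1 ≠ 0 by linarith)] using h2
    have hmain : Filter.Tendsto (fun t : ℝ => (S.card : ℝ) * (2 * (t ^ (γ - 1) * ‖v‖ ^ γ / γ - ‖v‖)))
        (nhdsWithin (0:ℝ) (Set.Ioi 0)) (nhds ((S.card : ℝ) * (2 * (0 * ‖v‖ ^ γ / γ - ‖v‖)))) := by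
      apply Filter.Tendsto.const_mul
      apply Filter.Tendsto.const_mul
      exact ((hbase.mul_const (‖v‖ ^ γ)).div_const γ).sub_const ‖v‖
    apply hmain.congr'
    filter_upwards [self_mem_nhdsWithin] with t ht
    simp only [Set.mem_Ioi] at ht
    have htn : ‖t • v‖ = t * ‖v‖ := by
      rw [norm_smul, Real.norm_eq_abs, abs_of_pos ht]
    rw [htn, Real.rpow_one, Real.mul_rpow (le_of_lt ht) (norm_nonneg v)]
    have htne : t ≠ 0 := ne_of_gt ht
    have ht1 : t ^ γ = t ^ (γ - 1) * t := by
      rw [← Real.rpow_add_one htne]; ring_nf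
    rw [eq_div_iff htne, ht1]
    ring
  have hslope : Filter.Tendsto (fun t => (g t - g 0) / t) (nhdsWithin (0:ℝ) (Set.Ioi 0))
      (nhds (2 * ⟪G, v⟫ + (S.card : ℝ) * (2 * (0 * ‖v‖ ^ γ / γ - ‖v‖)))) := by
    have := hslopeφ.add hslopeS
    apply this.congr
    intro t
    rw [hg t, hg0]
    ring
  have hnonneg : ∀ᶠ t in nhdsWithin (0:ℝ) (Set.Ioi 0), 0 ≤ (g t - g 0) / t := by
    filter_upwards [self_mem_nhdsWithin] with t ht
    simp only [Set.mem_Ioi] at ht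
    apply div_nonneg _ (le_of_lt ht)
    have : g 0 ≤ g t := by
      rw [hgdef]
      simp only
      have h0 : Function.update x p (x p + (0:ℝ) • v) = x := by
        simp [Function.update_eq_self]
      rw [h0]
      exact hmin _
    linarith
  have hlim_nonneg : (0:ℝ) ≤ 2 * ⟪G, v⟫ + (S.card : ℝ) * (2 * (0 * ‖v‖ ^ γ / γ - ‖v‖)) :=
    ge_of_tendsto hslope hnonneg
  have hcard : 1 ≤ (S.card : ℝ) := by
    have : k ∈ S := by
      rw [hS]
      simp [Finset.mem_filter, Finset.mem_erase, hk, hke]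
    have := Finset.card_pos.mpr ⟨k, this⟩
    exact_mod_cast this
  have hz : 0 * ‖v‖ ^ γ / γ = 0 := by ring
  rw [hz] at hlim_nonneg
  nlinarith [hvpos, hGv, hcard]

theorem stmt_11 (d n : ℕ) (α γ : ℝ) (hα : 1 ≤ α) (h : α < γ) (hγ : γ < 2)
    (c : ℝ) (hc : 0 < c)
    (hineq : ∀ η ξ : EuclideanSpace ℝ (Fin d), ¬(η = 0 ∧ ξ = 0) →
      (inner ℝ (‖η‖ ^ (γ - 2) • η - ‖ξ‖ ^ (γ - 2) • ξ) (η - ξ) : ℝ) ≥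
        c * (‖η‖ + ‖ξ‖) ^ (γ - 2) * ‖η - ξ‖ ^ 2)
    (x : Fin n → EuclideanSpace ℝ (Fin d))
    (hmin : ∀ y : Fin n → EuclideanSpace ℝ (Fin d), En d n α γ x ≤ En d n α γ y) :
    ∀ i j, ‖x i - x j‖ ≤ (2 / min ((2 : ℝ) ^ (γ - 2) * c) 1) ^ (1 / (γ - α)) := by
  intro i j
  have hγ1 : 1 < γ := lt_of_le_of_lt hα h
  have hγα : 0 < γ - α := by linarith
  have hm : 0 < min ((2:ℝ) ^ (γ - 2) * c) 1 := lt_min (by positivity) one_pos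
  have hRpos : 0 < (2 / min ((2:ℝ) ^ (γ - 2) * c) 1) ^ (1 / (γ - α)) :=
    Real.rpow_pos_of_pos (by positivity) _
  by_cases hd : d = 0
  · subst hd
    have hxx : x i = x j := Subsingleton.elim _ _
    rw [hxx]
    simp only [sub_self, norm_zero]
    linarith
  have hd0 : 0 < d := Nat.pos_of_ne_zero hd
  obtain ⟨q, -, hmax⟩ := Finset.exists_max_image (univ : Finset (Fin n × Fin n))
    (fun pr => ‖x pr.1 - x pr.2‖) ⟨(i, j), mem_univ _⟩
  set D := ‖x q.1 - x q.2‖ with hD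
  have hij : ‖x i - x j‖ ≤ D := hmax (i, j) (mem_univ _)
  suffices hDle : D ≤ (2 / min ((2:ℝ) ^ (γ - 2) * c) 1) ^ (1 / (γ - α)) by linarith
  rcases eq_or_lt_of_le (norm_nonneg (x q.1 - x q.2)) with hD0 | hDpos
  · rw [hD, ← hD0]; linarith
  rw [← hD] at hDpos
  set i0 := q.1
  set j0 := q.2
  set u := x i0 - x j0 with hu
  have hsep : ∀ p : Fin n, ∀ k ∈ univ.erase p, x p - x k ≠ 0 ∨ 1 < α := by
    intro p k hk
    rcases eq_or_lt_of_le hα with hα1 | hα1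
    · left
      have hmin1 : ∀ y : Fin n → EuclideanSpace ℝ (Fin d), En d n 1 γ x ≤ En d n 1 γ y := by
        rw [hα1]; exact hmin
      exact sub_ne_zero_of_ne (Ne.symm (separated d n γ hγ1 hd0 x hmin1 p k (Finset.ne_of_mem_erase hk)))
    · right; exact hα1
  have hα0 : (0:ℝ) < α := by linarith
  have E1 := first_order d n α γ hα0 hγ1 x hmin i0 u (hsep i0)
  have E2 := first_order d n α γ hα0 hγ1 x hmin j0 u (hsep j0)
  -- combine the two first-order conditions
  have key : ∑ k, (‖x i0 - x k‖ ^ (γ - 2) * ⟪x i0 - x k, u⟫ - ‖x j0 - x k‖ ^ (γ - 2) * ⟪x j0 - x k, u⟫)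
      = ∑ k, (‖x i0 - x k‖ ^ (α - 2) * ⟪x i0 - x k, u⟫ - ‖x j0 - x k‖ ^ (α - 2) * ⟪x j0 - x k, u⟫) := by
    have hdiff : ∑ k, (‖x i0 - x k‖ ^ (γ - 2) * ⟪x i0 - x k, u⟫ - ‖x j0 - x k‖ ^ (γ - 2) * ⟪x j0 - x k, u⟫)
        - ∑ k, (‖x i0 - x k‖ ^ (α - 2) * ⟪x i0 - x k, u⟫ - ‖x j0 - x k‖ ^ (α - 2) * ⟪x j0 - x k, u⟫)
        = (∑ k, (‖x i0 - x k‖ ^ (γ - 2) - ‖x i0 - x k‖ ^ (α - 2)) * ⟪x i0 - x k, u⟫)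
          - ∑ k, (‖x j0 - x k‖ ^ (γ - 2) - ‖x j0 - x k‖ ^ (α - 2)) * ⟪x j0 - x k, u⟫ := by
      rw [← Finset.sum_sub_distrib, ← Finset.sum_sub_distrib]
      apply Finset.sum_congr rfl
      intro k _
      ring
    rw [E1, E2] at hdiff
    linarith [hdiff]
  -- lower bound on the γ side
  have hγlow : ∀ k : Fin n,
      min ((2:ℝ) ^ (γ - 2) * c) 1 * D ^ γ ≤
        ‖x i0 - x k‖ ^ (γ - 2) * ⟪x i0 - x k, u⟫ - ‖x j0 - x k‖ ^ (γ - 2) * ⟪x j0 - x k, u⟫ := by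
    intro k
    set η := x i0 - x k with hη
    set ξ := x j0 - x k with hξ
    have hne : ¬(η = 0 ∧ ξ = 0) := by
      rintro ⟨h1, h2⟩
      have e1 : x i0 = x k := by rwa [hη, sub_eq_zero] at h1
      have e2 : x j0 = x k := by rwa [hξ, sub_eq_zero] at h2
      have hD' : D = 0 := by rw [hD, hu, e1, e2, sub_self, norm_zero]
      linarith
    have hsub : η - ξ = u := by rw [hη, hξ, hu]; abel
    have h1 := hineq η ξ hne
    rw [hsub] at h1
    have hLHS : (inner ℝ (‖η‖ ^ (γ - 2) • η - ‖ξ‖ ^ (γ - 2) • ξ) u : ℝ)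
        = ‖η‖ ^ (γ - 2) * ⟪η, u⟫ - ‖ξ‖ ^ (γ - 2) * ⟪ξ, u⟫ := by
      rw [inner_sub_left, real_inner_smul_left, real_inner_smul_left]
    rw [hLHS] at h1
    refine le_trans ?_ h1
    have hηD : ‖η‖ ≤ D := hmax (i0, k) (mem_univ _)
    have hξD : ‖ξ‖ ≤ D := hmax (j0, k) (mem_univ _)
    have hpos : 0 < ‖η‖ + ‖ξ‖ := by
      rcases not_and_or.mp hne with h' | h'
      · have := norm_pos_iff.mpr h'
        linarith [norm_nonneg ξ]
      · have := norm_pos_iff.mpr h'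
        linarith [norm_nonneg η]
    have hle2D : ‖η‖ + ‖ξ‖ ≤ 2 * D := by linarith
    have hrpow : (2 * D) ^ (γ - 2) ≤ (‖η‖ + ‖ξ‖) ^ (γ - 2) :=
      Real.rpow_le_rpow_of_nonpos hpos hle2D (by linarith)
    have huD : ‖u‖ = D := hD.symm
    rw [huD]
    have hstep : c * (2 * D) ^ (γ - 2) * D ^ 2 ≤ c * (‖η‖ + ‖ξ‖) ^ (γ - 2) * D ^ 2 := by
      apply mul_le_mul_of_nonneg_right _ (by positivity)
      exact mul_le_mul_of_nonneg_left hrpow (le_of_lt hc)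
    refine le_trans ?_ hstep
    have hexp : c * (2 * D) ^ (γ - 2) * D ^ 2 = ((2:ℝ) ^ (γ - 2) * c) * D ^ γ := by
      rw [Real.mul_rpow (by norm_num) (le_of_lt hDpos)]
      have : D ^ γ = D ^ (γ - 2) * D ^ 2 := by
        rw [← Real.rpow_natCast D 2, ← Real.rpow_add hDpos]
        norm_num
      rw [this]
      ring
    rw [hexp]
    apply mul_le_mul_of_nonneg_right (min_le_left _ _)
    positivity
  -- upper bound on the α side
  have hαup : ∀ k : Fin n,
      ‖x i0 - x k‖ ^ (α - 2) * ⟪x i0 - x k, u⟫ - ‖x j0 - x k‖ ^ (α - 2) * ⟪x j0 - x k, u⟫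
        ≤ 2 * D ^ α := by
    intro k
    have hbound : ∀ w : EuclideanSpace ℝ (Fin d), ‖w‖ ≤ D →
        ‖w‖ ^ (α - 2) * |⟪w, u⟫| ≤ D ^ α := by
      intro w hw
      rcases eq_or_ne w 0 with rfl | hw0
      · simp only [inner_zero_left, abs_zero, mul_zero]
        positivity
      · have hwpos : 0 < ‖w‖ := norm_pos_iff.mpr hw0
        have h1 : |⟪w, u⟫| ≤ ‖w‖ * ‖u‖ := abs_real_inner_le_norm w u
        have huD : ‖u‖ = D := hD.symm
        have h2 : ‖w‖ ^ (α - 2) * |⟪w, u⟫| ≤ ‖w‖ ^ (α - 2) * (‖w‖ * D) := by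
          apply mul_le_mul_of_nonneg_left _ (Real.rpow_nonneg (norm_nonneg w) _)
          rw [← huD]; exact h1
        refine le_trans h2 ?_
        have h3 : ‖w‖ ^ (α - 2) * ‖w‖ = ‖w‖ ^ (α - 1) := by
          rw [← Real.rpow_add_one (ne_of_gt hwpos)]
          ring_nf
        have h4 : ‖w‖ ^ (α - 1) ≤ D ^ (α - 1) :=
          Real.rpow_le_rpow (norm_nonneg w) hw (by linarith)
        have h5 : D ^ (α - 1) * D = D ^ α := by
          rw [← Real.rpow_add_one (ne_of_gt hDpos)]
          ring_nf
        calc ‖w‖ ^ (α - 2) * (‖w‖ * D) = (‖w‖ ^ (α - 2) * ‖w‖) * D := by ring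
          _ = ‖w‖ ^ (α - 1) * D := by rw [h3]
          _ ≤ D ^ (α - 1) * D := mul_le_mul_of_nonneg_right h4 (le_of_lt hDpos)
          _ = D ^ α := h5
    have hb1 := hbound (x i0 - x k) (hmax (i0, k) (mem_univ _))
    have hb2 := hbound (x j0 - x k) (hmax (j0, k) (mem_univ _))
    have e1 : ‖x i0 - x k‖ ^ (α - 2) * ⟪x i0 - x k, u⟫ ≤ D ^ α := by
      refine le_trans ?_ hb1
      apply mul_le_mul_of_nonneg_left (le_abs_self _) (Real.rpow_nonneg (norm_nonneg _) _)
    have e2 : - (‖x j0 - x k‖ ^ (α - 2) * ⟪x j0 - x k, u⟫) ≤ D ^ α := by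
      refine le_trans ?_ hb2
      rw [← mul_neg]
      apply mul_le_mul_of_nonneg_left (neg_le_abs _) (Real.rpow_nonneg (norm_nonneg _) _)
    linarith
  -- sum the bounds
  have hsumlow : (n : ℝ) * (min ((2:ℝ) ^ (γ - 2) * c) 1 * D ^ γ)
      ≤ ∑ k, (‖x i0 - x k‖ ^ (γ - 2) * ⟪x i0 - x k, u⟫ - ‖x j0 - x k‖ ^ (γ - 2) * ⟪x j0 - x k, u⟫) := by
    have := Finset.card_nsmul_le_sum univ
      (fun k => ‖x i0 - x k‖ ^ (γ - 2) * ⟪x i0 - x k, u⟫ - ‖x j0 - x k‖ ^ (γ - 2) * ⟪x j0 - x k, u⟫)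
      (min ((2:ℝ) ^ (γ - 2) * c) 1 * D ^ γ) (fun k _ => hγlow k)
    simpa [nsmul_eq_mul] using this
  have hsumup : ∑ k, (‖x i0 - x k‖ ^ (α - 2) * ⟪x i0 - x k, u⟫ - ‖x j0 - x k‖ ^ (α - 2) * ⟪x j0 - x k, u⟫)
      ≤ (n : ℝ) * (2 * D ^ α) := by
    have := Finset.sum_le_card_nsmul univ
      (fun k => ‖x i0 - x k‖ ^ (α - 2) * ⟪x i0 - x k, u⟫ - ‖x j0 - x k‖ ^ (α - 2) * ⟪x j0 - x k, u⟫)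
      (2 * D ^ α) (fun k _ => hαup k)
    simpa [nsmul_eq_mul] using this
  have hn : (0:ℝ) < n := by
    have := i.pos
    exact_mod_cast this
  have hmain : min ((2:ℝ) ^ (γ - 2) * c) 1 * D ^ γ ≤ 2 * D ^ α := by
    rw [key] at hsumlow
    have := le_trans hsumlow hsumup
    exact le_of_mul_le_mul_left (by linarith [this]) hn
  -- conclude
  have hDγ : D ^ γ = D ^ α * D ^ (γ - α) := by
    rw [← Real.rpow_add hDpos]
    ring_nf
  have hDα : 0 < D ^ α := Real.rpow_pos_of_pos hDpos α
  have hfin : D ^ (γ - α) ≤ 2 / min ((2:ℝ) ^ (γ - 2) * c) 1 := by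
    have h8 : min ((2:ℝ) ^ (γ - 2) * c) 1 * D ^ (γ - α) * D ^ α = min ((2:ℝ) ^ (γ - 2) * c) 1 * D ^ γ := by
      rw [hDγ]; ring
    have h9 : min ((2:ℝ) ^ (γ - 2) * c) 1 * D ^ (γ - α) * D ^ α ≤ 2 * D ^ α := by
      rw [h8]; exact hmain
    have h7 := le_of_mul_le_mul_right h9 hDα
    rw [le_div_iff₀ hm]
    linarith
  have := Real.rpow_le_rpow (Real.rpow_nonneg (le_of_lt hDpos) _) hfin (le_of_lt (by positivity : (0:ℝ) < 1 / (γ - α)))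
  rw [← Real.rpow_mul (le_of_lt hDpos)] at this
  rw [mul_one_div_cancel (ne_of_gt hγα), Real.rpow_one] at this
  exact this
end

section
/- Suppose α < γ < 0 and α < −2. If x = (x_1 ≤ … ≤ x_n) ∈ ℝ^n is a global minimizer of E_n (over distinct points in ℝ), then consecutive points satisfy x_{i+1} − x_i ≥ a_n, where a_n ∈ (0,1) is the unique small solution of w(a_n) = (1/α − 1/γ) n². -/
open Finset

noncomputable def En1 (n : ℕ) (α γ : ℝ) (x : Fin n → ℝ) : ℝ :=
  ∑ i, ∑ j, if i = j then 0 else |x i - x j| ^ γ / γ - |x i - x j| ^ α / α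

open Finset

section aux
variable {α γ : ℝ}

lemma w_anti (hα : α < 0) (hγ : γ < 0) (h : α < γ) :
    StrictAntiOn (fun r : ℝ => r ^ γ / γ - r ^ α / α) (Set.Ioc 0 1) := by
  apply strictAntiOn_of_deriv_neg (convex_Ioc 0 1)
  · intro r hr
    exact (((Real.continuousAt_rpow_const r γ (Or.inl (ne_of_gt hr.1))).div_const γ).sub
      ((Real.continuousAt_rpow_const r α (Or.inl (ne_of_gt hr.1))).div_const α)).continuousWithinAt
  · rw [interior_Ioc]
    intro r hr
    have hr0 : r ≠ 0 := ne_of_gt hr.1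
    have hd : HasDerivAt (fun r : ℝ => r ^ γ / γ - r ^ α / α)
        (r ^ (γ - 1) - r ^ (α - 1)) r := by
      have h1 := (Real.hasDerivAt_rpow_const (p := γ) (Or.inl hr0)).div_const γ
      have h2 := (Real.hasDerivAt_rpow_const (p := α) (Or.inl hr0)).div_const α
      have h3 : HasDerivAt (fun r : ℝ => r ^ γ / γ - r ^ α / α) _ r := h1.sub h2
      convert h3 using 1
      have hγ0 : γ ≠ 0 := ne_of_lt hγ
      have hα0 : α ≠ 0 := ne_of_lt hα
      rw [mul_div_cancel_left₀ _ hγ0, mul_div_cancel_left₀ _ hα0]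
    rw [hd.deriv]
    have : r ^ (γ - 1) < r ^ (α - 1) :=
      Real.rpow_lt_rpow_of_exponent_gt hr.1 hr.2 (by linarith)
    linarith

lemma w_mono (hα : α < 0) (hγ : γ < 0) (h : α < γ) :
    StrictMonoOn (fun r : ℝ => r ^ γ / γ - r ^ α / α) (Set.Ici 1) := by
  apply strictMonoOn_of_deriv_pos (convex_Ici 1)
  · intro r hr
    have hr0 : r ≠ 0 := by intro hh; simp [hh] at hr; linarith [hr]
    exact (((Real.continuousAt_rpow_const r γ (Or.inl hr0)).div_const γ).sub
      ((Real.continuousAt_rpow_const r α (Or.inl hr0)).div_const α)).continuousWithinAt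
  · rw [interior_Ici]
    intro r hr
    have hr1 : (1:ℝ) < r := hr
    have hr0 : r ≠ 0 := by positivity
    have hd : HasDerivAt (fun r : ℝ => r ^ γ / γ - r ^ α / α)
        (r ^ (γ - 1) - r ^ (α - 1)) r := by
      have h1 := (Real.hasDerivAt_rpow_const (p := γ) (Or.inl hr0)).div_const γ
      have h2 := (Real.hasDerivAt_rpow_const (p := α) (Or.inl hr0)).div_const α
      have h3 : HasDerivAt (fun r : ℝ => r ^ γ / γ - r ^ α / α) _ r := h1.sub h2
      convert h3 using 1
      have hγ0 : γ ≠ 0 := ne_of_lt hγ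
      have hα0 : α ≠ 0 := ne_of_lt hα
      rw [mul_div_cancel_left₀ _ hγ0, mul_div_cancel_left₀ _ hα0]
    rw [hd.deriv]
    have : r ^ (α - 1) < r ^ (γ - 1) :=
      Real.rpow_lt_rpow_of_exponent_lt hr1 (by linarith)
    linarith

lemma w_min (hα : α < 0) (hγ : γ < 0) (h : α < γ) (r : ℝ) (hr : 0 < r) :
    1 / γ - 1 / α ≤ r ^ γ / γ - r ^ α / α := by
  have h1 : (1:ℝ) ^ γ / γ - (1:ℝ) ^ α / α = 1 / γ - 1 / α := by
    rw [Real.one_rpow, Real.one_rpow]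
  rcases lt_trichotomy r 1 with hr1 | hr1 | hr1
  · have := w_anti hα hγ h (Set.mem_Ioc.2 ⟨hr, hr1.le⟩) (Set.mem_Ioc.2 ⟨one_pos, le_refl 1⟩) hr1
    simp only at this
    linarith [h1 ▸ this]
  · rw [hr1, h1]
  · have := w_mono hα hγ h (Set.mem_Ici.2 (le_refl 1)) (Set.mem_Ici.2 hr1.le) hr1
    simp only at this
    linarith [h1 ▸ this]

lemma w_neg (hα : α < 0) (hγ : γ < 0) (h : α < γ) (s : ℝ) (hs : 1 ≤ s) :
    s ^ γ / γ - s ^ α / α < 0 := by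
  have hs0 : (0:ℝ) < s := by linarith
  have hA : 0 < s ^ α := Real.rpow_pos_of_pos hs0 α
  have hG : 0 < s ^ γ := Real.rpow_pos_of_pos hs0 γ
  have hle : s ^ α ≤ s ^ γ := Real.rpow_le_rpow_of_exponent_le hs h.le
  have hnum : s ^ γ * α - γ * s ^ α < 0 := by nlinarith
  rw [div_sub_div _ _ (ne_of_lt hγ) (ne_of_lt hα)]
  exact div_neg_of_neg_of_pos hnum (mul_pos_of_neg_of_neg hγ hα)

end aux
theorem stmt_13 (n : ℕ) (hn : 2 ≤ n) (α γ : ℝ) (h : α < γ) (hγ : γ < 0) (hα : α < -2)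
    (x : Fin n → ℝ) (hmono : Monotone x) (hinj : Function.Injective x)
    (hmin : ∀ y : Fin n → ℝ, Function.Injective y → En1 n α γ x ≤ En1 n α γ y)
    (a : ℝ) (ha0 : 0 < a) (ha1 : a < 1)
    (haw : a ^ γ / γ - a ^ α / α = (1 / α - 1 / γ) * (n : ℝ) ^ 2) :
    ∀ i : Fin n, ∀ h1 : (i : ℕ) + 1 < n, x ⟨(i : ℕ) + 1, h1⟩ - x i ≥ a := by
  have hα0 : α < 0 := by linarith
  have hC : 0 < 1 / α - 1 / γ := by
    have hαne : α ≠ 0 := ne_of_lt (by linarith : α < 0)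
    have hγne : γ ≠ 0 := ne_of_lt hγ
    have : 1 / α - 1 / γ = (γ - α) / (α * γ) := by
      field_simp
    rw [this]
    exact div_pos (by linarith) (mul_pos_of_neg_of_neg hα0 hγ)
  -- the comparison configuration: equally spaced points at distance 1
  set y : Fin n → ℝ := fun i => ((i : ℕ) : ℝ) with hy
  have hyi : Function.Injective y := by
    intro i j hij
    exact Fin.ext (Nat.cast_injective hij)
  have hydist : ∀ i j : Fin n, i ≠ j → 1 ≤ |y i - y j| := by
    intro i j hij
    have hne : ((i : ℕ) : ℤ) ≠ ((j : ℕ) : ℤ) := by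
      intro hh
      exact hij (Fin.ext (by exact_mod_cast hh))
    have h2 : (1 : ℤ) ≤ |((i : ℕ) : ℤ) - ((j : ℕ) : ℤ)| := Int.one_le_abs (sub_ne_zero.2 hne)
    have : ((1 : ℤ) : ℝ) ≤ |(((i : ℕ) : ℤ) : ℝ) - (((j : ℕ) : ℤ) : ℝ)| := by
      rw [← Int.cast_sub, ← Int.cast_abs]
      exact_mod_cast h2
    simpa [hy] using this
  haveI : Nontrivial (Fin n) := ⟨⟨⟨0, by omega⟩, ⟨1, by omega⟩, by simp [Fin.ext_iff]⟩⟩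
  have hEy : En1 n α γ y < 0 := by
    unfold En1
    have : ∀ i ∈ (univ : Finset (Fin n)),
        (∑ j, if i = j then 0 else |y i - y j| ^ γ / γ - |y i - y j| ^ α / α) < 0 := by
      intro i _
      have hlt : (∑ j, if i = j then 0 else |y i - y j| ^ γ / γ - |y i - y j| ^ α / α)
          < ∑ _j : Fin n, (0 : ℝ) := by
        apply Finset.sum_lt_sum
        · intro j _
          by_cases hij : i = j
          · simp [hij]
          · simp only [hij, if_false]
            exact (w_neg hα0 hγ h _ (hydist i j hij)).le
        · obtain ⟨j, hj⟩ := exists_ne i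
          refine ⟨j, Finset.mem_univ j, ?_⟩
          have hij : i ≠ j := fun hh => hj hh.symm
          simp only [hij, if_false]
          exact w_neg hα0 hγ h _ (hydist i j hij)
      simpa using hlt
    calc En1 n α γ y = ∑ i, ∑ j, (if i = j then 0 else |y i - y j| ^ γ / γ - |y i - y j| ^ α / α) := rfl
      _ < 0 := Finset.sum_neg this Finset.univ_nonempty
  have hEx := hmin y hyi
  -- now suppose a gap is smaller than a
  intro i h1
  by_contra hlt
  push_neg at hlt
  set i1 : Fin n := ⟨(i : ℕ) + 1, h1⟩ with hi1
  have hii1 : i ≠ i1 := by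
    intro hh
    have := congrArg Fin.val hh
    simp [hi1] at this
  have hsm : StrictMono x := hmono.strictMono_of_injective hinj
  have hxi : x i < x i1 := hsm (by simp [hi1, Fin.lt_def])
  set d : ℝ := x i1 - x i with hd
  have hd0 : 0 < d := by linarith
  have hda : d < a := by simp only [hd]; linarith
  have hwd : (1 / α - 1 / γ) * (n : ℝ) ^ 2 < d ^ γ / γ - d ^ α / α := by
    have := w_anti hα0 hγ h (Set.mem_Ioc.2 ⟨hd0, by linarith⟩)
      (Set.mem_Ioc.2 ⟨ha0, ha1.le⟩) hda
    simp only at this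
    linarith [haw ▸ this]
  -- lower bound for the energy of x
  set f : Fin n × Fin n → ℝ :=
    fun p => if p.1 = p.2 then 0 else |x p.1 - x p.2| ^ γ / γ - |x p.1 - x p.2| ^ α / α with hf
  have hfE : En1 n α γ x = ∑ p : Fin n × Fin n, f p := by
    rw [← Finset.univ_product_univ, Finset.sum_product]
    rfl
  have hflb : ∀ p : Fin n × Fin n, -((1 / α - 1 / γ)) ≤ f p := by
    intro p
    by_cases hp : p.1 = p.2
    · have hfz : f p = 0 := by simp [hf, hp]
      rw [hfz]
      linarith
    · have hpos : 0 < |x p.1 - x p.2| :=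
        abs_pos.2 (sub_ne_zero.2 fun hh => hp (hinj hh))
      have := w_min hα0 hγ h _ hpos
      simp only [hf, hp, if_false]
      linarith
  set p1 : Fin n × Fin n := (i, i1) with hp1
  set p2 : Fin n × Fin n := (i1, i) with hp2
  have hp12 : p1 ≠ p2 := by
    intro hh
    exact hii1 (congrArg Prod.fst hh)
  have habs1 : |x i - x i1| = d := by
    rw [abs_sub_comm]
    exact abs_of_pos hd0
  have habs2 : |x i1 - x i| = d := abs_of_pos hd0
  have hfp1 : f p1 = d ^ γ / γ - d ^ α / α := by
    simp [hf, hp1, hii1, habs1]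
  have hii1' : i1 ≠ i := fun hh => hii1 hh.symm
  have hfp2 : f p2 = d ^ γ / γ - d ^ α / α := by
    simp [hf, hp2, hii1', habs2]
  have hsplit : (∑ p ∈ (univ : Finset (Fin n × Fin n)) \ {p1, p2}, f p)
      + ∑ p ∈ ({p1, p2} : Finset (Fin n × Fin n)), f p = ∑ p : Fin n × Fin n, f p :=
    Finset.sum_sdiff (Finset.subset_univ _)
  have hpair : ∑ p ∈ ({p1, p2} : Finset (Fin n × Fin n)), f p = f p1 + f p2 :=
    Finset.sum_pair hp12
  -- bound the rest
  have hcard : (((univ : Finset (Fin n × Fin n)) \ {p1, p2}).card : ℝ) ≤ (n : ℝ) ^ 2 := by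
    have h1 : ((univ : Finset (Fin n × Fin n)) \ {p1, p2}).card ≤ n * n := by
      calc ((univ : Finset (Fin n × Fin n)) \ {p1, p2}).card
          ≤ (univ : Finset (Fin n × Fin n)).card := Finset.card_le_card (Finset.sdiff_subset)
        _ = n * n := by simp [Finset.card_univ]
    calc (((univ : Finset (Fin n × Fin n)) \ {p1, p2}).card : ℝ) ≤ ((n * n : ℕ) : ℝ) := by
          exact_mod_cast h1
      _ = (n : ℝ) ^ 2 := by push_cast; ring
  have hrest : -((1 / α - 1 / γ) * (n : ℝ) ^ 2)
      ≤ ∑ p ∈ (univ : Finset (Fin n × Fin n)) \ {p1, p2}, f p := by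
    have h1 := Finset.card_nsmul_le_sum ((univ : Finset (Fin n × Fin n)) \ {p1, p2}) f
      (-(1 / α - 1 / γ)) (fun p _ => hflb p)
    rw [nsmul_eq_mul] at h1
    have h2 : -((1 / α - 1 / γ) * (n : ℝ) ^ 2)
        ≤ (((univ : Finset (Fin n × Fin n)) \ {p1, p2}).card : ℝ) * (-(1 / α - 1 / γ)) := by
      nlinarith [hcard]
    linarith
  have hpos2 : 0 < (1 / α - 1 / γ) * (n : ℝ) ^ 2 := by
    have : (0 : ℝ) < (n : ℝ) ^ 2 := by positivity
    nlinarith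
  have hEx2 : En1 n α γ x < 0 := lt_of_le_of_lt hEx hEy
  rw [hfE, ← hsplit, hpair, hfp1, hfp2] at hEx2
  linarith
end

section
/- Suppose α < γ < 0 and α < −2. There is a constant C_{α,γ} > 0 such that for all sufficiently large n, every global minimizer x = (x_1 ≤ … ≤ x_n) of E_n in ℝ satisfies x_n − x_1 ≥ C_{α,γ} n^{1 + 2/α}. In particular, since 1 + 2/α > 0, the diameter tends to infinity with n. -/
open Finset

lemma div_le_div_of_neg' {c : ℝ} (hc : c < 0) {a b : ℝ} (hab : a ≤ b) :
    b / c ≤ a / c := by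
  rw [div_eq_mul_inv, div_eq_mul_inv]
  exact mul_le_mul_of_nonpos_right hab (by rw [inv_nonpos]; linarith)

lemma pot_key (α γ : ℝ) (h : α < γ) (hγ : γ < 0) (hα : α < -2) :
    ∃ M : ℝ, 0 < M ∧ ∀ r : ℝ, 0 < r →
      -(r ^ α) / (2 * α) ≤ (r ^ γ / γ - r ^ α / α) + M := by
  have hα0 : α < 0 := by linarith
  have hγ' : γ ≠ 0 := hγ.ne
  have hα' : α ≠ 0 := hα0.ne
  have hq : 0 < γ / (2 * α) := div_pos_of_neg_of_neg hγ (by linarith)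
  set r₀ : ℝ := (γ / (2 * α)) ^ ((γ - α)⁻¹) with hr₀def
  have hr₀ : 0 < r₀ := Real.rpow_pos_of_pos hq _
  have hr₀pow : r₀ ^ (γ - α) = γ / (2 * α) := by
    rw [hr₀def, ← Real.rpow_mul hq.le, inv_mul_cancel₀ (by linarith : γ - α ≠ 0),
      Real.rpow_one]
  have hr₀γ : 0 < r₀ ^ γ := Real.rpow_pos_of_pos hr₀ _
  refine ⟨-(r₀ ^ γ / γ), by rw [neg_pos]; exact div_neg_of_pos_of_neg hr₀γ hγ, ?_⟩
  intro r hr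
  have hrα : 0 < r ^ α := Real.rpow_pos_of_pos hr _
  have hrγ : 0 < r ^ γ := Real.rpow_pos_of_pos hr _
  have hmain : r₀ ^ γ / γ ≤ r ^ γ / γ - r ^ α / (2 * α) := by
    rcases le_or_gt r₀ r with hcase | hcase
    · have h1 : r ^ γ ≤ r₀ ^ γ := Real.rpow_le_rpow_of_nonpos hr₀ hcase hγ.le
      have h2 := div_le_div_of_neg' hγ h1
      have h3 : r ^ α / (2 * α) ≤ 0 :=
        div_nonpos_of_nonneg_of_nonpos hrα.le (by linarith)
      linarith
    · have h1 : r ^ (γ - α) ≤ γ / (2 * α) := by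
        rw [← hr₀pow]
        exact Real.rpow_le_rpow hr.le hcase.le (by linarith)
      have h2 : r ^ γ = r ^ (γ - α) * r ^ α := by
        rw [← Real.rpow_add hr]; ring_nf
      have h3 : r ^ γ ≤ (γ / (2 * α)) * r ^ α := by
        rw [h2]; exact mul_le_mul_of_nonneg_right h1 hrα.le
      have h4 := div_le_div_of_neg' hγ h3
      have heq : ((γ / (2 * α)) * r ^ α) / γ = r ^ α / (2 * α) := by
        field_simp
      rw [heq] at h4
      have h5 : r₀ ^ γ / γ < 0 := div_neg_of_pos_of_neg hr₀γ hγ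
      linarith
  have hsplit : r ^ α / α = r ^ α / (2 * α) + r ^ α / (2 * α) := by
    field_simp
    ring
  have hneg : -(r ^ α) / (2 * α) = -(r ^ α / (2 * α)) := neg_div _ _
  rw [hneg]
  linarith

lemma En1_upper (n : ℕ) (α γ : ℝ) (hγ : γ < 0) (hα0 : α < 0) :
    En1 n α γ (fun j => (j.val : ℝ)) ≤ (-1/α) * (n * n) := by
  have hc : 0 < -1/α := by
    rw [neg_div]; exact neg_pos.mpr (div_neg_of_pos_of_neg one_pos hα0)
  unfold En1
  calc (∑ i : Fin n, ∑ j : Fin n, (if i = j then (0:ℝ) else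
      |(i.val:ℝ) - (j.val:ℝ)| ^ γ / γ - |(i.val:ℝ) - (j.val:ℝ)| ^ α / α))
      ≤ ∑ _i : Fin n, ∑ _j : Fin n, (-1/α) := by
        refine Finset.sum_le_sum fun i _ => Finset.sum_le_sum fun j _ => ?_
        split_ifs with hij
        · linarith
        · have hne : i.val ≠ j.val := fun hh => hij (Fin.ext hh)
          have h1 : (1:ℤ) ≤ |(i.val:ℤ) - (j.val:ℤ)| :=
            Int.one_le_abs (sub_ne_zero.mpr (by exact_mod_cast hne))
          have h1' : (1:ℝ) ≤ |(i.val:ℝ) - (j.val:ℝ)| := by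
            have := h1
            push_cast at this ⊢
            exact_mod_cast this
          set r := |(i.val:ℝ) - (j.val:ℝ)| with hr
          have hr0 : 0 < r := by linarith
          have hrγ : 0 < r ^ γ := Real.rpow_pos_of_pos hr0 _
          have h2 : r ^ γ / γ ≤ 0 := div_nonpos_of_nonneg_of_nonpos hrγ.le hγ.le
          have h3 : r ^ α ≤ 1 := by
            have := Real.rpow_le_rpow_of_nonpos one_pos h1' hα0.le
            simpa using this
          have h4 : (1:ℝ)/α ≤ r ^ α / α := div_le_div_of_neg' hα0 h3
          have h5 : -1/α = -((1:ℝ)/α) := by ring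
          have h6 : -(r ^ α / α) ≤ -((1:ℝ)/α) := by linarith
          linarith
    _ = (-1/α) * (n * n) := by
        simp [Finset.sum_const, Finset.card_univ, nsmul_eq_mul]
        ring

lemma En1_lower (n : ℕ) (α γ : ℝ) (M : ℝ) (hM : 0 < M) (x : Fin n → ℝ)
    (hinj : Function.Injective x)
    (hkey : ∀ r : ℝ, 0 < r → 0 ≤ (r ^ γ / γ - r ^ α / α) + M)
    (i0 j0 : Fin n) (hne : i0 ≠ j0) :
    (|x i0 - x j0| ^ γ / γ - |x i0 - x j0| ^ α / α + M) - M * (n * n)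
      ≤ En1 n α γ x := by
  set g : Fin n → Fin n → ℝ := fun i j =>
    if i = j then M else |x i - x j| ^ γ / γ - |x i - x j| ^ α / α + M with hg
  have hgnn : ∀ i j : Fin n, 0 ≤ g i j := by
    intro i j
    simp only [hg]
    split_ifs with hij
    · exact hM.le
    · have hpos : 0 < |x i - x j| :=
        abs_pos.mpr (sub_ne_zero.mpr (fun hh => hij (hinj hh)))
      exact hkey _ hpos
  have hEn : En1 n α γ x = (∑ i, ∑ j, g i j) - M * (n * n) := by
    unfold En1
    have : ∀ i j : Fin n, (if i = j then (0:ℝ) else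
        |x i - x j| ^ γ / γ - |x i - x j| ^ α / α) = g i j - M := by
      intro i j
      simp only [hg]
      split_ifs with hij <;> ring
    simp only [this, Finset.sum_sub_distrib, Finset.sum_const, Finset.card_univ,
      Fintype.card_fin, nsmul_eq_mul]
    ring
  rw [hEn]
  have h1 : g i0 j0 ≤ ∑ j, g i0 j :=
    Finset.single_le_sum (fun j _ => hgnn i0 j) (Finset.mem_univ j0)
  have h2 : (∑ j, g i0 j) ≤ ∑ i, ∑ j, g i j :=
    Finset.single_le_sum (f := fun i => ∑ j, g i j)
      (fun i _ => Finset.sum_nonneg fun j _ => hgnn i j) (Finset.mem_univ i0)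
  have h3 : g i0 j0 = |x i0 - x j0| ^ γ / γ - |x i0 - x j0| ^ α / α + M := by
    simp only [hg, if_neg hne]
  linarith

lemma exists_small_gap (n : ℕ) (hn : 2 ≤ n) (x : Fin n → ℝ) :
    ∃ k : ℕ, ∃ hk : k + 1 < n,
      x ⟨k + 1, hk⟩ - x ⟨k, by omega⟩
        ≤ (x ⟨n - 1, by omega⟩ - x ⟨0, by omega⟩) / (n - 1 : ℕ) := by
  set m := n - 1 with hm
  have hm1 : 1 ≤ m := by omega
  set D := x ⟨n - 1, by omega⟩ - x ⟨0, by omega⟩ with hD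
  set f : ℕ → ℝ := fun k => x ⟨min k (n - 1), by omega⟩ with hf
  have hfeq : ∀ k : ℕ, ∀ hk : k < n, f k = x ⟨k, hk⟩ := by
    intro k hk
    have : min k (n - 1) = k ∨ min k (n-1) = n - 1 := by omega
    rcases this with h' | h'
    · simp only [hf, h']
    · have hk' : k = n - 1 ∨ k < n - 1 := by omega
      rcases hk' with h2 | h2
      · subst h2; simp only [hf, h']
      · omega
  have hmk : (⟨m, by omega⟩ : Fin n) = ⟨n - 1, by omega⟩ :=
    Fin.ext (show m = n - 1 by omega)
  have htel : ∑ k ∈ Finset.range m, (f (k + 1) - f k) = D := by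
    rw [Finset.sum_range_sub]
    rw [hfeq m (by omega), hfeq 0 (by omega), hmk, hD]
  by_contra hcon
  push_neg at hcon
  have hall : ∀ k ∈ Finset.range m, D / m < f (k + 1) - f k := by
    intro k hk
    rw [Finset.mem_range] at hk
    have hk1 : k + 1 < n := by omega
    have h3 := hcon k hk1
    rw [hfeq (k+1) hk1, hfeq k (by omega)]
    convert h3 using 2
  have hlt : ∑ _k ∈ Finset.range m, (D / m) < ∑ k ∈ Finset.range m, (f (k + 1) - f k) :=
    Finset.sum_lt_sum_of_nonempty (by simp; omega) hall
  rw [htel, Finset.sum_const, Finset.card_range, nsmul_eq_mul,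
    mul_div_cancel₀ _ (by positivity : (m : ℝ) ≠ 0)] at hlt
  exact lt_irrefl _ hlt

theorem stmt_14 (α γ : ℝ) (h : α < γ) (hγ : γ < 0) (hα : α < -2) :
    ∃ C : ℝ, 0 < C ∧ ∃ N : ℕ, ∀ n : ℕ, N ≤ n → ∀ hn : 2 ≤ n,
      ∀ x : Fin n → ℝ, Monotone x → Function.Injective x →
        (∀ y : Fin n → ℝ, Function.Injective y → En1 n α γ x ≤ En1 n α γ y) →
        x ⟨n - 1, by omega⟩ - x ⟨0, by omega⟩ ≥ C * (n : ℝ) ^ (1 + 2 / α) := by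
  obtain ⟨M, hM, hkey⟩ := pot_key α γ h hγ hα
  have hα0 : α < 0 := by linarith
  have hα' : α ≠ 0 := hα0.ne
  have hma : 0 < -1/α := by
    rw [neg_div]; exact neg_pos.mpr (div_neg_of_pos_of_neg one_pos hα0)
  set K₂ : ℝ := (-1/α + M) * (-(2*α)) with hK₂
  have hK₂pos : 0 < K₂ := mul_pos (by linarith) (by linarith)
  have hCpos : 0 < K₂ ^ (α⁻¹) / 2 := by
    have := Real.rpow_pos_of_pos hK₂pos (α⁻¹)
    linarith
  refine ⟨K₂ ^ (α⁻¹) / 2, hCpos, 2, ?_⟩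
  intro n hN hn x hmono hinj hmin
  have hn0 : (0:ℝ) < n := by positivity
  have hn2 : (2:ℝ) ≤ n := by exact_mod_cast hn
  have hsm : StrictMono x := hmono.strictMono_of_injective hinj
  -- upper bound via test configuration
  have hyinj : Function.Injective (fun j : Fin n => (j.val : ℝ)) := by
    intro a b hab
    exact Fin.ext (Nat.cast_injective hab)
  have hub : En1 n α γ x ≤ (-1/α) * (n * n) :=
    le_trans (hmin _ hyinj) (En1_upper n α γ hγ hα0)
  -- small gap
  obtain ⟨k0, hk1, hgap⟩ := exists_small_gap n hn x
  set i0 : Fin n := ⟨k0, by omega⟩ with hi0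
  set j0 : Fin n := ⟨k0 + 1, hk1⟩ with hj0
  have hij : i0 < j0 := by
    rw [Fin.lt_def]; simp [hi0, hj0]
  have hne : i0 ≠ j0 := ne_of_lt hij
  have hd0 : 0 < x j0 - x i0 := sub_pos.mpr (hsm hij)
  set d : ℝ := x j0 - x i0 with hd
  have habs : |x i0 - x j0| = d := by
    rw [abs_sub_comm]; exact abs_of_pos hd0
  -- lower bound
  have hkey' : ∀ r : ℝ, 0 < r → 0 ≤ (r ^ γ / γ - r ^ α / α) + M := by
    intro r hr
    refine le_trans ?_ (hkey r hr)
    have h1 : 0 < r ^ α := Real.rpow_pos_of_pos hr α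
    have h2 : r ^ α / (2 * α) ≤ 0 :=
      div_nonpos_of_nonneg_of_nonpos h1.le (by linarith)
    rw [neg_div]
    linarith
  have hlow := En1_lower n α γ M hM x hinj hkey' i0 j0 hne
  rw [habs] at hlow
  have hk2 := hkey d hd0
  -- D and m
  set m : ℕ := n - 1 with hm
  have hm1 : 1 ≤ m := by omega
  have hmr : (0:ℝ) < m := by
    have : (1:ℝ) ≤ m := by exact_mod_cast hm1
    linarith
  set D : ℝ := x ⟨n - 1, by omega⟩ - x ⟨0, by omega⟩ with hD
  have hD0 : 0 < D := by
    rw [hD]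
    refine sub_pos.mpr (hsm ?_)
    rw [Fin.lt_def]
    simp
    omega
  set u : ℝ := D / m with hu
  have hu0 : 0 < u := div_pos hD0 hmr
  have hdu : d ≤ u := hgap
  -- combine
  have hanti : u ^ α ≤ d ^ α := Real.rpow_le_rpow_of_nonpos hd0 hdu hα0.le
  have h7 : -(d ^ α) / (2 * α) ≤ (-1/α + M) * (n * n) := by nlinarith [hlow, hub, hk2]
  have h8 : -(u ^ α) / (2 * α) ≤ -(d ^ α) / (2 * α) :=
    div_le_div_of_neg' (by linarith) (neg_le_neg hanti)
  have h9 : u ^ α ≤ K₂ * (n * n) := by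
    have hid : (-(u ^ α) / (2 * α)) * (-(2 * α)) = u ^ α := by
      field_simp
    have h82 := mul_le_mul_of_nonneg_right (h8.trans h7)
      (by linarith : (0:ℝ) ≤ -(2*α))
    rw [hid] at h82
    calc u ^ α ≤ ((-1/α + M) * (n * n)) * (-(2*α)) := h82
      _ = K₂ * (n * n) := by rw [hK₂]; ring
  have h10 : (K₂ * (n * n)) ^ (α⁻¹) ≤ u := by
    have hp : 0 < u ^ α := Real.rpow_pos_of_pos hu0 _
    have hz : α⁻¹ ≤ 0 := inv_nonpos.mpr hα0.le
    have h101 := Real.rpow_le_rpow_of_nonpos (z := α⁻¹) hp h9 hz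
    rwa [← Real.rpow_mul hu0.le, mul_inv_cancel₀ hα', Real.rpow_one] at h101
  have h11 : (K₂ * (n * n)) ^ (α⁻¹) = K₂ ^ (α⁻¹) * (n:ℝ) ^ (2/α) := by
    rw [Real.mul_rpow hK₂pos.le (by positivity)]
    congr 1
    have hnn : ((n:ℝ) * n) = (n:ℝ) ^ (2:ℝ) := by
      rw [show ((2:ℝ)) = ((2:ℕ):ℝ) by norm_num, Real.rpow_natCast]
      ring
    have hdm : (2:ℝ)/α = 2 * α⁻¹ := div_eq_mul_inv _ _
    rw [hnn, ← Real.rpow_mul hn0.le, hdm]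
  rw [h11] at h10
  -- final arithmetic
  have hVpos : 0 < K₂ ^ (α⁻¹) * (n:ℝ) ^ (2/α) :=
    mul_pos (Real.rpow_pos_of_pos hK₂pos _) (Real.rpow_pos_of_pos hn0 _)
  have hmn2 : (n:ℝ) / 2 ≤ (m:ℝ) := by
    have : (m:ℝ) = (n:ℝ) - 1 := by
      rw [hm]
      push_cast [Nat.cast_sub (by omega : 1 ≤ n)]
      ring
    rw [this]
    linarith
  have hfin : (K₂ ^ (α⁻¹) * (n:ℝ) ^ (2/α)) * ((n:ℝ)/2) ≤ D := by
    calc (K₂ ^ (α⁻¹) * (n:ℝ) ^ (2/α)) * ((n:ℝ)/2)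
        ≤ (K₂ ^ (α⁻¹) * (n:ℝ) ^ (2/α)) * (m:ℝ) :=
          mul_le_mul_of_nonneg_left hmn2 hVpos.le
      _ ≤ u * m := mul_le_mul_of_nonneg_right h10 hmr.le
      _ = D := by rw [hu]; field_simp
  have hrpow : (n:ℝ) ^ (1 + 2/α) = (n:ℝ) * (n:ℝ) ^ (2/α) := by
    rw [Real.rpow_add hn0, Real.rpow_one]
  rw [ge_iff_le, hrpow]
  calc K₂ ^ (α⁻¹) / 2 * ((n:ℝ) * (n:ℝ) ^ (2/α))
      = (K₂ ^ (α⁻¹) * (n:ℝ) ^ (2/α)) * ((n:ℝ)/2) := by ring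
    _ ≤ D := hfin
end
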